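/- arXiv:2301.09604 — 8 statements merged into one kernel-verified Lean document; each statement's English description precedes it below -/
import Mathlib

section
/- Let w, w*, w_1, …, w_M ∈ ℝ^d satisfy the approximate projection condition (1/M) Σ_{i=1}^M ‖w_i − w*‖² ≤ ‖w − w*‖². Define Δ_i = w − w_i and Δ̄ = (1/M) Σ_{i=1}^M Δ_i. Then ⟨w − w*, Δ̄⟩ ≥ (1/(2M)) Σ_{i=1}^M ‖Δ_i‖². Consequently, if Δ̄ ≠ 0, the unique minimizer η_opt = ⟨w − w*, Δ̄⟩ / ‖Δ̄‖² of the function η ↦ ‖w − ηΔ̄ − w*‖² satisfies η_opt ≥ Σ_{i=1}^M ‖Δ_i‖² / (2M ‖Δ̄‖²). -/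
open scoped RealInnerProductSpace

/-- Under the approximate projection condition, the inner product of `w - wstar` with the
average pseudo-gradient is at least half the average squared pseudo-gradient norm; hence the
unique minimizer of `η ↦ ‖w - η • Δ̄ - wstar‖²` is lower bounded by
`(∑ i, ‖Δ i‖²) / (2 M ‖Δ̄‖²)` whenever `Δ̄ ≠ 0`. -/
theorem eta_opt_lower_bound {d M : ℕ} (hM : 0 < M)
    (w wstar : EuclideanSpace ℝ (Fin d)) (wi : Fin M → EuclideanSpace ℝ (Fin d))
    (hproj : (1 / (M : ℝ)) * ∑ i, ‖wi i - wstar‖ ^ 2 ≤ ‖w - wstar‖ ^ 2)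
    (Δ : Fin M → EuclideanSpace ℝ (Fin d)) (hΔ : ∀ i, Δ i = w - wi i)
    (Δbar : EuclideanSpace ℝ (Fin d)) (hΔbar : Δbar = (1 / (M : ℝ)) • ∑ i, Δ i) :
    ⟪w - wstar, Δbar⟫ ≥ (1 / (2 * (M : ℝ))) * ∑ i, ‖Δ i‖ ^ 2 ∧
    (Δbar ≠ 0 →
      (∀ η : ℝ,
        ‖w - (⟪w - wstar, Δbar⟫ / ‖Δbar‖ ^ 2) • Δbar - wstar‖ ^ 2 ≤
          ‖w - η • Δbar - wstar‖ ^ 2) ∧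
      (∀ η : ℝ, (∀ η' : ℝ, ‖w - η • Δbar - wstar‖ ^ 2 ≤ ‖w - η' • Δbar - wstar‖ ^ 2) →
        η = ⟪w - wstar, Δbar⟫ / ‖Δbar‖ ^ 2) ∧
      ⟪w - wstar, Δbar⟫ / ‖Δbar‖ ^ 2 ≥
        (∑ i, ‖Δ i‖ ^ 2) / (2 * (M : ℝ) * ‖Δbar‖ ^ 2)) := by
  have hMR : (0:ℝ) < (M:ℝ) := by exact_mod_cast hM
  set v := w - wstar with hv
  have hterm : ∀ i, ‖wi i - wstar‖ ^ 2 = ‖v‖ ^ 2 - 2 * ⟪v, Δ i⟫ + ‖Δ i‖ ^ 2 := by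
    intro i
    have h1 : wi i - wstar = v - Δ i := by rw [hΔ i, hv]; abel
    rw [h1, norm_sub_sq_real]
  have hsum : ∑ i, ‖wi i - wstar‖ ^ 2 =
      (M:ℝ) * ‖v‖ ^ 2 - 2 * ∑ i, ⟪v, Δ i⟫ + ∑ i, ‖Δ i‖ ^ 2 := by
    simp only [hterm, Finset.sum_add_distrib, Finset.sum_sub_distrib, Finset.sum_const,
      Finset.card_univ, Fintype.card_fin, nsmul_eq_mul, Finset.mul_sum]
  have hinner : ⟪v, Δbar⟫ = (1 / (M:ℝ)) * ∑ i, ⟪v, Δ i⟫ := by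
    rw [hΔbar, inner_smul_right, inner_sum]
  have hS : ∑ i, ‖Δ i‖ ^ 2 ≤ 2 * ∑ i, ⟪v, Δ i⟫ := by
    have h := hproj
    rw [hsum, one_div, inv_mul_le_iff₀ hMR] at h
    nlinarith
  have key : ⟪v, Δbar⟫ ≥ (1 / (2 * (M:ℝ))) * ∑ i, ‖Δ i‖ ^ 2 := by
    rw [hinner, ge_iff_le, div_mul_eq_mul_div, div_mul_eq_mul_div,
      div_le_div_iff₀ (by positivity) hMR]
    nlinarith
  refine ⟨key, fun hne => ?_⟩
  have hΔ0 : (0:ℝ) < ‖Δbar‖ := norm_pos_iff.mpr hne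
  have hΔ2 : (0:ℝ) < ‖Δbar‖ ^ 2 := by positivity
  set η₀ : ℝ := ⟪v, Δbar⟫ / ‖Δbar‖ ^ 2 with hη₀
  have hη₀' : η₀ * ‖Δbar‖ ^ 2 = ⟪v, Δbar⟫ := by
    rw [hη₀, div_mul_cancel₀ _ (ne_of_gt hΔ2)]
  have hf : ∀ η : ℝ, ‖w - η • Δbar - wstar‖ ^ 2 =
      ‖v‖ ^ 2 - 2 * η * ⟪v, Δbar⟫ + η ^ 2 * ‖Δbar‖ ^ 2 := by
    intro η
    have h1 : w - η • Δbar - wstar = v - η • Δbar := by rw [hv]; abel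
    rw [h1, norm_sub_sq_real, inner_smul_right, norm_smul]
    simp [mul_pow]
    ring
  refine ⟨fun η => ?_, fun η hη => ?_, ?_⟩
  · rw [hf, hf, ← hη₀']
    nlinarith [mul_nonneg (sq_nonneg (η - η₀)) hΔ2.le]
  · have h1 := hη η₀
    have h2 : ‖w - η₀ • Δbar - wstar‖ ^ 2 ≤ ‖w - η • Δbar - wstar‖ ^ 2 := by
      rw [hf, hf, ← hη₀']
      nlinarith [mul_nonneg (sq_nonneg (η - η₀)) hΔ2.le]
    have heq : ‖w - η • Δbar - wstar‖ ^ 2 = ‖w - η₀ • Δbar - wstar‖ ^ 2 := le_antisymm h1 h2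
    rw [hf, hf, ← hη₀'] at heq
    have h0 : (η - η₀) ^ 2 * ‖Δbar‖ ^ 2 = 0 := by linear_combination heq
    have h3 : (η - η₀) ^ 2 = 0 := by
      rcases mul_eq_zero.1 h0 with h | h
      · exact h
      · exact absurd h (ne_of_gt hΔ2)
    have h4 := pow_eq_zero_iff (n := 2) (by norm_num) |>.1 h3
    have := sub_eq_zero.1 h4
    linarith [this.le, this.ge]
  · have hkey : ∑ i, ‖Δ i‖ ^ 2 ≤ ⟪v, Δbar⟫ * (2 * (M:ℝ)) := by
      rw [ge_iff_le, div_mul_eq_mul_div, div_le_iff₀ (by positivity)] at key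
      linarith
    rw [ge_iff_le, div_le_iff₀ (by positivity)]
    nlinarith [hkey, hη₀', hMR, hΔ2]
end

section
/- Let w, w*, w_1, …, w_M ∈ ℝ^d satisfy the approximate projection condition (1/M) Σ_{i=1}^M ‖w_i − w*‖² ≤ ‖w − w*‖². Define Δ_i = w − w_i and Δ̄ = (1/M) Σ_{i=1}^M Δ_i, and assume Δ̄ ≠ 0. Let η_opt = ⟨w − w*, Δ̄⟩ / ‖Δ̄‖² and let η_F = max{1, Σ_{i=1}^M ‖Δ_i‖² / (2M ‖Δ̄‖²)} be the FedExP step size (with ε = 0). Then |η_opt − η_F| ≤ |η_opt − 1|, and consequently ‖w − η_F Δ̄ − w*‖² ≤ ‖w − Δ̄ − w*‖². -/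
open scoped RealInnerProductSpace

/-- The FedExP step size (with `ε = 0`) is at least as close to the optimal server step size as
the FedAvg step size `1`, and hence the FedExP update is at least as close to the optimum as the
FedAvg update. -/
theorem fedexp_step_closer_than_fedavg {d M : ℕ} (hM : 0 < M)
    (w wstar : EuclideanSpace ℝ (Fin d)) (wi : Fin M → EuclideanSpace ℝ (Fin d))
    (hproj : (1 / (M : ℝ)) * ∑ i, ‖wi i - wstar‖ ^ 2 ≤ ‖w - wstar‖ ^ 2)
    (Δ : Fin M → EuclideanSpace ℝ (Fin d)) (hΔ : ∀ i, Δ i = w - wi i)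
    (Δbar : EuclideanSpace ℝ (Fin d)) (hΔbar : Δbar = (1 / (M : ℝ)) • ∑ i, Δ i)
    (hΔbarne : Δbar ≠ 0)
    (ηopt ηF : ℝ) (hηopt : ηopt = ⟪w - wstar, Δbar⟫ / ‖Δbar‖ ^ 2)
    (hηF : ηF = max 1 ((∑ i, ‖Δ i‖ ^ 2) / (2 * (M : ℝ) * ‖Δbar‖ ^ 2))) :
    |ηopt - ηF| ≤ |ηopt - 1| ∧
    ‖w - ηF • Δbar - wstar‖ ^ 2 ≤ ‖w - Δbar - wstar‖ ^ 2 := by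
  have hMpos : (0:ℝ) < M := Nat.cast_pos.mpr hM
  have hC : (0:ℝ) < ‖Δbar‖ ^ 2 := by
    have := norm_pos_iff.mpr hΔbarne
    positivity
  set v := w - wstar with hv
  have hexp : ∀ i, ‖wi i - wstar‖ ^ 2 = ‖v‖ ^ 2 - 2 * ⟪v, Δ i⟫ + ‖Δ i‖ ^ 2 := by
    intro i
    have h1 : wi i - wstar = v - Δ i := by rw [hΔ, hv]; abel
    rw [h1, @norm_sub_sq_real]
  have hinner : ⟪v, Δbar⟫ = (1 / (M:ℝ)) * ∑ i, ⟪v, Δ i⟫ := by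
    rw [hΔbar, real_inner_smul_right, inner_sum]
  have hsum : ∑ i, ‖wi i - wstar‖ ^ 2
      = (M:ℝ) * ‖v‖ ^ 2 - 2 * (M:ℝ) * ⟪v, Δbar⟫ + ∑ i, ‖Δ i‖ ^ 2 := by
    rw [Finset.sum_congr rfl fun i _ => hexp i]
    rw [Finset.sum_add_distrib, Finset.sum_sub_distrib, Finset.sum_const,
      Finset.card_univ, Fintype.card_fin, ← Finset.mul_sum, hinner]
    push_cast
    field_simp
    ring
  -- key: ∑ ‖Δ i‖^2 ≤ 2 M ⟪v, Δbar⟫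
  have hkey : ∑ i, ‖Δ i‖ ^ 2 ≤ 2 * (M:ℝ) * ⟪v, Δbar⟫ := by
    rw [hsum] at hproj
    have hM' : (M:ℝ) ≠ 0 := ne_of_gt hMpos
    rw [div_mul_eq_mul_div, one_mul, div_le_iff₀ hMpos] at hproj
    nlinarith
  set S : ℝ := (∑ i, ‖Δ i‖ ^ 2) / (2 * (M:ℝ) * ‖Δbar‖ ^ 2) with hS
  have hSle : S ≤ ηopt := by
    rw [hS, hηopt]
    rw [div_le_div_iff₀ (by positivity) hC]
    nlinarith [hkey, hC]
  have part1 : |ηopt - ηF| ≤ |ηopt - 1| := by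
    rcases le_or_gt S 1 with h | h
    · rw [hηF, max_eq_left h]
    · rw [hηF, max_eq_right h.le]
      have h1 : 1 ≤ ηopt := le_trans h.le hSle
      rw [abs_of_nonneg (by linarith), abs_of_nonneg (by linarith)]
      linarith
  refine ⟨part1, ?_⟩
  have hB : ⟪v, Δbar⟫ = ηopt * ‖Δbar‖ ^ 2 := by
    rw [hηopt]; field_simp
  have hf : ∀ η : ℝ, ‖w - η • Δbar - wstar‖ ^ 2
      = ‖v‖ ^ 2 - 2 * η * ⟪v, Δbar⟫ + η ^ 2 * ‖Δbar‖ ^ 2 := by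
    intro η
    have h1 : w - η • Δbar - wstar = v - η • Δbar := by rw [hv]; abel
    rw [h1, @norm_sub_sq_real, real_inner_smul_right, norm_smul]
    simp [mul_pow]
    ring
  have h2 : ‖w - Δbar - wstar‖ ^ 2 = ‖v‖ ^ 2 - 2 * ⟪v, Δbar⟫ + ‖Δbar‖ ^ 2 := by
    have h1 : w - Δbar - wstar = v - Δbar := by rw [hv]; abel
    rw [h1, @norm_sub_sq_real]
  rw [hf ηF, h2, hB]
  have hsq : (ηopt - ηF) ^ 2 ≤ (ηopt - 1) ^ 2 := by
    rw [← sq_abs (ηopt - ηF), ← sq_abs (ηopt - 1)]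
    exact pow_le_pow_left₀ (abs_nonneg _) part1 2
  nlinarith [hC, hsq]
end

section
/- (Theorem 1, convex convergence of FedExP, with explicit constants.) Let F_1, …, F_M : ℝ^d → ℝ be convex, differentiable and L-smooth, let F = (1/M)Σ_{i=1}^M F_i, let w* be a minimizer of F, and assume (1/M) Σ_{i=1}^M ‖∇F_i(w*)‖² ≤ σ*². Fix τ ≥ 1 and 0 < η_l ≤ 1/(6τL). Starting from w^{(0)} ∈ ℝ^d, for each round t = 0,…,T−1 define local full-batch gradient descent iterates w_i^{(t,0)} = w^{(t)}, w_i^{(t,k+1)} = w_i^{(t,k)} − η_l ∇F_i(w_i^{(t,k)}) for k = 0,…,τ−1, client updates Δ_i^{(t)} = w^{(t)} − w_i^{(t,τ)}, average update Δ̄^{(t)} = (1/M)Σ_{i=1}^M Δ_i^{(t)}, and server update w^{(t+1)} = w^{(t)} − η_g^{(t)} Δ̄^{(t)}, where the server step sizes satisfy η_g^{(t)} ≥ 1 and M η_g^{(t)} ‖Δ̄^{(t)}‖² ≤ Σ_{i=1}^M ‖Δ_i^{(t)}‖² for every t (as holds for the FedExP step size max{1, Σ_i ‖Δ_i^{(t)}‖²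 / (2M‖Δ̄^{(t)}‖²)}). Then (Σ_{t=0}^{T−1} η_g^{(t)} (F(w^{(t)}) − F(w*))) / (Σ_{t=0}^{T−1} η_g^{(t)}) ≤ 3‖w^{(0)} − w*‖² / (η_l τ Σ_{t=0}^{T−1} η_g^{(t)}) + 9 η_l τ σ*² + 36 η_l² τ(τ−1) L σ*². -/
open Set Finset
open scoped InnerProductSpace

variable {E : Type*} [NormedAddCommGroup E] [InnerProductSpace ℝ E] [CompleteSpace E]

lemma fedexp_hasDerivAt_comp_line (f : E → ℝ) (hf : Differentiable ℝ f) (x h : E) (t : ℝ) :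
    HasDerivAt (fun s : ℝ => f (x + s • h)) ⟪gradient f (x + t • h), h⟫_ℝ t := by
  have hc : HasDerivAt (fun s : ℝ => x + s • h) h t := by
    simpa using ((hasDerivAt_id t).smul_const h).const_add x
  have hg := (hf (x + t • h)).hasGradientAt.hasFDerivAt
  have := hg.comp_hasDerivAt t hc
  simpa [InnerProductSpace.toDual_apply_apply, Function.comp_def] using this

lemma fedexp_descent (f : E → ℝ) (hf : Differentiable ℝ f) {L : ℝ}
    (hL : ∀ a b : E, ‖gradient f a - gradient f b‖ ≤ L * ‖a - b‖) (x y : E) :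
    f y ≤ f x + ⟪gradient f x, y - x⟫_ℝ + L / 2 * ‖y - x‖ ^ 2 := by
  set h := y - x with hh
  set φ : ℝ → ℝ := fun t =>
    f (x + t • h) - t * ⟪gradient f x, h⟫_ℝ - L * t ^ 2 * ‖h‖ ^ 2 / 2 with hφ
  have hφd : ∀ t : ℝ, HasDerivAt φ
      (⟪gradient f (x + t • h), h⟫_ℝ - ⟪gradient f x, h⟫_ℝ - L * t * ‖h‖ ^ 2) t := by
    intro t
    have h1 := fedexp_hasDerivAt_comp_line f hf x h t
    have h2 : HasDerivAt (fun s : ℝ => s * ⟪gradient f x, h⟫_ℝ) ⟪gradient f x, h⟫_ℝ t := by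
      simpa using (hasDerivAt_id t).mul_const (⟪gradient f x, h⟫_ℝ)
    have h3 : HasDerivAt (fun s : ℝ => L * s ^ 2 * ‖h‖ ^ 2 / 2) (L * t * ‖h‖ ^ 2) t := by
      have := (((hasDerivAt_pow 2 t).const_mul L).mul_const (‖h‖ ^ 2)).div_const 2
      refine this.congr_deriv ?_
      ring
    exact (h1.sub h2).sub h3
  have anti : AntitoneOn φ (Set.Icc (0:ℝ) 1) := by
    apply antitoneOn_of_deriv_nonpos (convex_Icc 0 1)
    · exact (Differentiable.continuous (fun t => (hφd t).differentiableAt)).continuousOn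
    · intro t _; exact ((hφd t).differentiableAt).differentiableWithinAt
    · intro t ht
      rw [interior_Icc] at ht
      rw [(hφd t).deriv]
      have cauchy : ⟪gradient f (x + t • h) - gradient f x, h⟫_ℝ ≤
          ‖gradient f (x + t • h) - gradient f x‖ * ‖h‖ := real_inner_le_norm _ _
      have hLb := hL (x + t • h) x
      have hn : ‖x + t • h - x‖ = t * ‖h‖ := by
        rw [add_sub_cancel_left, norm_smul, Real.norm_eq_abs, abs_of_pos ht.1]
      rw [hn] at hLb
      rw [inner_sub_left] at cauchy
      nlinarith [norm_nonneg h, norm_nonneg (gradient f (x + t • h) - gradient f x), ht.1.le]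
  have h01 := anti (Set.mem_Icc.mpr ⟨le_refl 0, zero_le_one⟩)
      (Set.mem_Icc.mpr ⟨zero_le_one, le_refl 1⟩) zero_le_one
  have e0 : φ 0 = f x := by simp [hφ]
  have e1 : φ 1 = f y - ⟪gradient f x, h⟫_ℝ - L * ‖h‖ ^ 2 / 2 := by
    simp [hφ, hh]
  rw [e0, e1] at h01
  have : L / 2 * ‖h‖ ^ 2 = L * ‖h‖ ^ 2 / 2 := by ring
  rw [hh] at *
  linarith

lemma fedexp_convex_ineq (f : E → ℝ) (hf : Differentiable ℝ f)
    (hc : ConvexOn ℝ Set.univ f) (x y : E) :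
    f x + ⟪gradient f x, y - x⟫_ℝ ≤ f y := by
  have hconv : ConvexOn ℝ Set.univ (f ∘ (AffineMap.lineMap x y : ℝ →ᵃ[ℝ] E)) := by
    simpa using hc.comp_affineMap (AffineMap.lineMap x y : ℝ →ᵃ[ℝ] E)
  have heq : (f ∘ (AffineMap.lineMap x y : ℝ →ᵃ[ℝ] E)) = fun t : ℝ => f (x + t • (y - x)) := by
    funext t
    simp [AffineMap.lineMap_apply_module', add_comm]
  rw [heq] at hconv
  have hd : HasDerivAt (fun t : ℝ => f (x + t • (y - x))) ⟪gradient f x, y - x⟫_ℝ 0 := by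
    have := fedexp_hasDerivAt_comp_line f hf x (y - x) 0
    simpa using this
  have hslope := hconv.le_slope_of_hasDerivAt (Set.mem_univ (0:ℝ)) (Set.mem_univ (1:ℝ))
      one_pos hd
  rw [slope_def_field] at hslope
  simp at hslope ⊢
  linarith

lemma fedexp_cocoercive (f : E → ℝ) (hf : Differentiable ℝ f)
    (hc : ConvexOn ℝ Set.univ f) {L : ℝ} (hL0 : 0 < L)
    (hL : ∀ a b : E, ‖gradient f a - gradient f b‖ ≤ L * ‖a - b‖) (x y : E) :
    ‖gradient f x - gradient f y‖ ^ 2 ≤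
      2 * L * (f x - f y - ⟪gradient f y, x - y⟫_ℝ) := by
  set v := gradient f x - gradient f y with hv
  set z := x - (1 / L) • v with hz
  have h1 := fedexp_descent f hf hL x z
  have h2 := fedexp_convex_ineq f hf hc y z
  have hzx : z - x = -((1 / L) • v) := by rw [hz]; abel
  have hzy : z - y = (x - y) - (1 / L) • v := by rw [hz]; abel
  rw [hzx] at h1
  rw [hzy] at h2
  rw [inner_neg_right, real_inner_smul_right, norm_neg, norm_smul, Real.norm_eq_abs,
    abs_of_pos (by positivity : (0:ℝ) < 1 / L)] at h1
  rw [inner_sub_right, real_inner_smul_right] at h2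
  have hxv : ⟪gradient f x, v⟫_ℝ - ⟪gradient f y, v⟫_ℝ = ‖v‖ ^ 2 := by
    rw [← inner_sub_left, ← hv, real_inner_self_eq_norm_sq]
  have hmul : (1 / L * ‖v‖) ^ 2 = 1 / L ^ 2 * ‖v‖ ^ 2 := by
    rw [mul_pow]; ring_nf
  rw [hmul] at h1
  have hL2 : (0:ℝ) < L ^ 2 := by positivity
  have key : 1 / L * ‖v‖ ^ 2 - L / 2 * (1 / L ^ 2 * ‖v‖ ^ 2) ≤
      f x - f y - ⟪gradient f y, x - y⟫_ℝ := by
    have e : 1 / L * ⟪gradient f x, v⟫_ℝ - 1 / L * ⟪gradient f y, v⟫_ℝ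
        = 1 / L * ‖v‖ ^ 2 := by rw [← mul_sub, hxv]
    linarith
  have hsimp : 1 / L * ‖v‖ ^ 2 - L / 2 * (1 / L ^ 2 * ‖v‖ ^ 2) = ‖v‖ ^ 2 / (2 * L) := by
    field_simp
    ring
  rw [hsimp] at key
  rw [div_le_iff₀ (by positivity : (0:ℝ) < 2 * L)] at key
  linarith [key]

lemma fedexp_norm_sum_sq_le (n : ℕ) (v : ℕ → E) :
    ‖∑ k ∈ Finset.range n, v k‖ ^ 2 ≤ n * ∑ k ∈ Finset.range n, ‖v k‖ ^ 2 := by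
  calc ‖∑ k ∈ Finset.range n, v k‖ ^ 2 ≤ (∑ k ∈ Finset.range n, ‖v k‖) ^ 2 := by
        apply pow_le_pow_left₀ (norm_nonneg _) (norm_sum_le _ _)
    _ ≤ (Finset.range n).card * ∑ k ∈ Finset.range n, ‖v k‖ ^ 2 :=
        sq_sum_le_card_mul_sum_sq
    _ = n * ∑ k ∈ Finset.range n, ‖v k‖ ^ 2 := by rw [Finset.card_range]

set_option maxHeartbeats 2000000 in
lemma fedexp_per_client (f : E → ℝ) (hf : Differentiable ℝ f) (hc : ConvexOn ℝ Set.univ f)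
    {L η : ℝ} (hL0 : 0 < L) (hη : 0 < η) (τ : ℕ) (hτ : 1 ≤ τ) (hηLτ : η * τ * L ≤ 1/6)
    (hL : ∀ a b : E, ‖gradient f a - gradient f b‖ ≤ L * ‖a - b‖)
    (ws : E) (x : ℕ → E) (hx : ∀ k < τ, x (k+1) = x k - η • gradient f (x k)) :
    -2 * ⟪x 0 - x τ, x 0 - ws⟫_ℝ + ‖x 0 - x τ‖^2 ≤
      -2*η*τ*(f (x 0) - f ws) + 3*η^2*τ^2*
        (‖gradient f (x 0) - gradient f ws‖^2 + ‖gradient f ws‖^2) := by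
  set g : ℕ → E := fun k => gradient f (x k) with hg
  set S : ℝ := ∑ k ∈ Finset.range τ, ‖g k‖^2 with hSdef
  set Dr : ℝ := ∑ k ∈ Finset.range τ, ‖x 0 - x k‖^2 with hDrdef
  set P : ℝ := ‖gradient f (x 0)‖^2 with hPdef
  set G : ℝ := ‖gradient f (x 0) - gradient f ws‖^2 with hGdef
  set σ2 : ℝ := ‖gradient f ws‖^2 with hσdef
  set Φ : ℝ := f (x 0) - f ws with hΦdef
  have hτR : (1:ℝ) ≤ (τ:ℝ) := by exact_mod_cast hτ
  -- claim 1 : partial sums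
  have claim1 : ∀ n, n ≤ τ → x 0 - x n = η • ∑ k ∈ Finset.range n, g k := by
    intro n
    induction n with
    | zero => intro _; simp
    | succ m ih =>
      intro hm
      have hmτ : m < τ := hm
      have e1 := hx m hmτ
      rw [Finset.sum_range_succ, smul_add, ← ih (le_of_lt hmτ), e1]
      abel
  have hΔeq : x 0 - x τ = η • ∑ k ∈ Finset.range τ, g k := claim1 τ le_rfl
  have hSnn : 0 ≤ S := Finset.sum_nonneg fun k _ => sq_nonneg _
  have hDrnn : 0 ≤ Dr := Finset.sum_nonneg fun k _ => sq_nonneg _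
  -- ‖Δ‖² ≤ η² τ S
  have hnormΔ : ‖x 0 - x τ‖^2 ≤ η^2 * τ * S := by
    rw [hΔeq, norm_smul, mul_pow, Real.norm_eq_abs, sq_abs]
    have := fedexp_norm_sum_sq_le τ g
    calc η^2 * ‖∑ k ∈ Finset.range τ, g k‖^2 ≤ η^2 * (τ * S) := by
          apply mul_le_mul_of_nonneg_left _ (sq_nonneg η)
          exact this
      _ = η^2 * τ * S := by ring
  -- drift bounds
  have hdrift : ∀ k, k < τ → ‖x 0 - x k‖^2 ≤ η^2 * k * S := by
    intro k hk
    rw [claim1 k (le_of_lt hk), norm_smul, mul_pow, Real.norm_eq_abs, sq_abs]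
    have h1 : ‖∑ j ∈ Finset.range k, g j‖^2 ≤ k * ∑ j ∈ Finset.range k, ‖g j‖^2 :=
      fedexp_norm_sum_sq_le k g
    have h2 : ∑ j ∈ Finset.range k, ‖g j‖^2 ≤ S := by
      apply Finset.sum_le_sum_of_subset_of_nonneg
      · exact Finset.range_subset_range.mpr (le_of_lt hk)
      · intro j _ _; exact sq_nonneg _
    have hk0 : (0:ℝ) ≤ k := Nat.cast_nonneg k
    have h3 : ‖∑ j ∈ Finset.range k, g j‖^2 ≤ (k:ℝ) * S :=
      h1.trans (mul_le_mul_of_nonneg_left h2 hk0)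
    calc η^2 * ‖∑ j ∈ Finset.range k, g j‖^2 ≤ η^2 * ((k:ℝ) * S) :=
          mul_le_mul_of_nonneg_left h3 (sq_nonneg η)
      _ = η^2 * k * S := by ring
  have hDr : Dr ≤ η^2 * (τ * (τ-1) / 2) * S := by
    have h1 : Dr ≤ ∑ k ∈ Finset.range τ, η^2 * k * S := by
      apply Finset.sum_le_sum
      intro k hk
      exact hdrift k (Finset.mem_range.mp hk)
    have h2 : ∑ k ∈ Finset.range τ, η^2 * (k:ℝ) * S = η^2 * (τ * (τ-1) / 2) * S := by
      rw [← Finset.sum_mul, ← Finset.mul_sum]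
      have : ∑ k ∈ Finset.range τ, (k:ℝ) = τ * (τ-1) / 2 := by
        have := Finset.sum_range_id_mul_two τ
        have h3 : ((∑ k ∈ Finset.range τ, k : ℕ) : ℝ) * 2 = (τ:ℝ) * ((τ:ℝ) - 1) := by
          rw [← Nat.cast_ofNat, ← Nat.cast_mul, this]
          have : ((τ - 1 : ℕ) : ℝ) = (τ:ℝ) - 1 := by
            rw [Nat.cast_sub hτ]; simp
          rw [Nat.cast_mul, this]
        push_cast at h3 ⊢
        linarith
      rw [this]
    linarith
  -- inner product lower bound per step
  have hinner : ∀ k, k < τ → Φ - L/2 * ‖x 0 - x k‖^2 ≤ ⟪g k, x 0 - ws⟫_ℝ := by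
    intro k _
    have hcv := fedexp_convex_ineq f hf hc (x k) ws
    have hds := fedexp_descent f hf hL (x k) (x 0)
    have hsplit : ⟪gradient f (x k), x 0 - ws⟫_ℝ
        = ⟪gradient f (x k), x 0 - x k⟫_ℝ + ⟪gradient f (x k), x k - ws⟫_ℝ := by
      rw [← inner_add_right]
      congr 1
      abel
    have hneg : ⟪gradient f (x k), x k - ws⟫_ℝ = - ⟪gradient f (x k), ws - x k⟫_ℝ := by
      rw [← inner_neg_right]
      congr 1
      abel
    rw [hsplit, hneg, hΦdef]
    linarith [hcv, hds]
  -- inner product with Δ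
  have hinnerΔ : η * (τ * Φ - L/2 * Dr) ≤ ⟪x 0 - x τ, x 0 - ws⟫_ℝ := by
    rw [hΔeq, real_inner_smul_left, sum_inner]
    apply mul_le_mul_of_nonneg_left _ (le_of_lt hη)
    have h1 : ∑ k ∈ Finset.range τ, (Φ - L/2 * ‖x 0 - x k‖^2) ≤
        ∑ k ∈ Finset.range τ, ⟪g k, x 0 - ws⟫_ℝ := by
      apply Finset.sum_le_sum
      intro k hk
      exact hinner k (Finset.mem_range.mp hk)
    have h2 : ∑ k ∈ Finset.range τ, (Φ - L/2 * ‖x 0 - x k‖^2) = τ * Φ - L/2 * Dr := by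
      rw [Finset.sum_sub_distrib, Finset.sum_const, Finset.card_range, ← Finset.mul_sum]
      push_cast
      ring
    linarith
  -- per-step gradient norm bound
  have hgk : ∀ k, k < τ → ‖g k‖^2 ≤ (5/4) * P + 5 * L^2 * ‖x 0 - x k‖^2 := by
    intro k _
    have htri : ‖g k‖ ≤ ‖g k - gradient f (x 0)‖ + ‖gradient f (x 0)‖ := by
      simpa using norm_add_le (g k - gradient f (x 0)) (gradient f (x 0))
    have hlip : ‖g k - gradient f (x 0)‖ ≤ L * ‖x 0 - x k‖ := by
      rw [norm_sub_rev (x 0) (x k)]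
      exact hL (x k) (x 0)
    have h0 : (0:ℝ) ≤ ‖g k - gradient f (x 0)‖ := norm_nonneg _
    have h1 : (0:ℝ) ≤ ‖gradient f (x 0)‖ := norm_nonneg _
    have h2 : (0:ℝ) ≤ ‖g k‖ := norm_nonneg _
    rw [hPdef]
    nlinarith [sq_nonneg (‖gradient f (x 0)‖/2 - 2*(L * ‖x 0 - x k‖)), norm_nonneg (x 0 - x k), mul_nonneg (le_of_lt hL0) (norm_nonneg (x 0 - x k))]
  have hSP : S ≤ (5/4) * τ * P + 5 * L^2 * Dr := by
    have h1 : S ≤ ∑ k ∈ Finset.range τ, ((5/4) * P + 5 * L^2 * ‖x 0 - x k‖^2) := by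
      apply Finset.sum_le_sum
      intro k hk
      exact hgk k (Finset.mem_range.mp hk)
    have h2 : ∑ k ∈ Finset.range τ, ((5/4) * P + 5 * L^2 * ‖x 0 - x k‖^2) =
        (5/4) * τ * P + 5 * L^2 * Dr := by
      rw [Finset.sum_add_distrib, Finset.sum_const, Finset.card_range, ← Finset.mul_sum]
      push_cast
      ring
    linarith
  have hP2 : P ≤ 2 * G + 2 * σ2 := by
    have htri : ‖gradient f (x 0)‖ ≤ ‖gradient f (x 0) - gradient f ws‖ + ‖gradient f ws‖ := by
      simpa using norm_add_le (gradient f (x 0) - gradient f ws) (gradient f ws)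
    rw [hPdef, hGdef, hσdef]
    nlinarith [mul_self_le_mul_self (norm_nonneg (gradient f (x 0))) htri,
      sq_nonneg (‖gradient f (x 0) - gradient f ws‖ - ‖gradient f ws‖)]
  have hPnn : 0 ≤ P := sq_nonneg _
  have hGnn : 0 ≤ G := sq_nonneg _
  have hσnn : 0 ≤ σ2 := sq_nonneg _
  -- numeric combination
  have hηLτ' : 0 < η * τ * L := by positivity
  have hρ : L^2 * (η^2 * (τ * (τ-1) / 2)) ≤ 1/72 := by
    nlinarith [sq_nonneg (η*τ*L), mul_pos hη hL0, hτR]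
  have hSfin : S ≤ (90/67) * τ * P := by
    have h1 : 5 * L^2 * Dr ≤ 5 * (L^2 * (η^2 * (τ * (τ-1) / 2))) * S := by
      have := mul_le_mul_of_nonneg_left hDr (by positivity : (0:ℝ) ≤ 5 * L^2)
      nlinarith
    have h2 : 5 * (L^2 * (η^2 * (τ * (τ-1) / 2))) * S ≤ (5/72) * S := by
      nlinarith
    have hτP : 0 ≤ (τ:ℝ) * P := by positivity
    linarith
  have hLDr : η * L * Dr ≤ (1/12) * (η^2 * τ * S) := by
    have h1 : η * L * Dr ≤ η * L * (η^2 * (τ * (τ-1) / 2) * S) := by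
      apply mul_le_mul_of_nonneg_left hDr (by positivity)
    have h2 : η * L * (η^2 * (τ * (τ-1) / 2) * S) ≤ (1/12) * (η^2 * τ * S) := by
      have hu : η * L * ((τ:ℝ) - 1) ≤ 1/6 := by
        nlinarith [mul_pos hη hL0]
      nlinarith [mul_nonneg (sq_nonneg η) (mul_nonneg hSnn (by linarith : (0:ℝ) ≤ (τ:ℝ) - 1)),
        mul_pos hη hL0, sq_nonneg η, mul_nonneg (sq_nonneg η) hSnn]
    linarith
  -- final assembly
  have hfinal : η * L * Dr + η^2 * τ * S ≤ 3 * η^2 * τ^2 * (G + σ2) := by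
    have h1 : η * L * Dr + η^2 * τ * S ≤ (13/12) * (η^2 * τ * S) := by
      linarith
    have h2 : η^2 * τ * S ≤ η^2 * τ * ((90/67) * τ * P) := by
      apply mul_le_mul_of_nonneg_left hSfin (by positivity)
    have h3 : η^2 * τ * ((90/67) * τ * P) ≤ η^2 * τ * ((90/67) * τ * (2*G + 2*σ2)) := by
      apply mul_le_mul_of_nonneg_left _ (by positivity : (0:ℝ) ≤ η^2 * τ)
      apply mul_le_mul_of_nonneg_left hP2 (by positivity)
    nlinarith [mul_nonneg (mul_nonneg (sq_nonneg η) (by positivity : (0:ℝ) ≤ (τ:ℝ)^2)) (by linarith : (0:ℝ) ≤ G + σ2)]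
  have goal1 : -2 * ⟪x 0 - x τ, x 0 - ws⟫_ℝ ≤ -2 * η * τ * Φ + η * L * Dr := by
    nlinarith [hinnerΔ]
  linarith [hnormΔ, hfinal]
set_option maxHeartbeats 2000000 in
/-- Theorem 1: convergence of FedExP for convex objectives, with explicit constants. -/
theorem fedexp_convex_convergence {d M : ℕ} (hM : 0 < M)
    (F : Fin M → EuclideanSpace ℝ (Fin d) → ℝ)
    (Fbar : EuclideanSpace ℝ (Fin d) → ℝ)
    (hFbar : ∀ w, Fbar w = (1 / (M : ℝ)) * ∑ i, F i w)
    (L ηl σstar : ℝ) (τ T : ℕ) (hτ : 1 ≤ τ)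
    (hconv : ∀ i, ConvexOn ℝ Set.univ (F i)) (hdiff : ∀ i, Differentiable ℝ (F i))
    (hsmooth : ∀ i, ∀ w w' : EuclideanSpace ℝ (Fin d),
      ‖gradient (F i) w - gradient (F i) w'‖ ≤ L * ‖w - w'‖)
    (wstar : EuclideanSpace ℝ (Fin d)) (hmin : ∀ w, Fbar wstar ≤ Fbar w)
    (hσ : (1 / (M : ℝ)) * ∑ i, ‖gradient (F i) wstar‖ ^ 2 ≤ σstar ^ 2)
    (hηl : 0 < ηl) (hηlL : ηl ≤ 1 / (6 * τ * L))
    (w : ℕ → EuclideanSpace ℝ (Fin d))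
    (wloc : ℕ → Fin M → ℕ → EuclideanSpace ℝ (Fin d))
    (hwloc0 : ∀ t < T, ∀ i, wloc t i 0 = w t)
    (hwlocrec : ∀ t < T, ∀ i, ∀ k < τ,
      wloc t i (k + 1) = wloc t i k - ηl • gradient (F i) (wloc t i k))
    (Δ : ℕ → Fin M → EuclideanSpace ℝ (Fin d))
    (hΔ : ∀ t < T, ∀ i, Δ t i = w t - wloc t i τ)
    (Δbar : ℕ → EuclideanSpace ℝ (Fin d))
    (hΔbar : ∀ t < T, Δbar t = (1 / (M : ℝ)) • ∑ i, Δ t i)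
    (ηg : ℕ → ℝ) (hηg1 : ∀ t < T, 1 ≤ ηg t)
    (hηgub : ∀ t < T, (M : ℝ) * ηg t * ‖Δbar t‖ ^ 2 ≤ ∑ i, ‖Δ t i‖ ^ 2)
    (hwrec : ∀ t < T, w (t + 1) = w t - ηg t • Δbar t) :
    (∑ t ∈ Finset.range T, ηg t * (Fbar (w t) - Fbar wstar)) /
        (∑ t ∈ Finset.range T, ηg t) ≤
      3 * ‖w 0 - wstar‖ ^ 2 / (ηl * τ * ∑ t ∈ Finset.range T, ηg t) +
        9 * ηl * τ * σstar ^ 2 + 36 * ηl ^ 2 * τ * (τ - 1) * L * σstar ^ 2 := by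
  have hMR : (0:ℝ) < M := Nat.cast_pos.mpr hM
  have hτR : (1:ℝ) ≤ (τ:ℝ) := Nat.one_le_cast.mpr hτ
  have hτ0 : (0:ℝ) < (τ:ℝ) := by linarith
  -- L must be positive
  have hL0 : 0 < L := by
    by_contra h
    push_neg at h
    have h6 : 6 * (τ:ℝ) * L ≤ 0 := by nlinarith
    have : 1 / (6 * (τ:ℝ) * L) ≤ 0 := one_div_nonpos.mpr h6
    linarith
  have h6pos : (0:ℝ) < 6 * (τ:ℝ) * L := by positivity
  have hηLτ : ηl * (τ:ℝ) * L ≤ 1/6 := by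
    have h1 := (le_div_iff₀ h6pos).mp hηlL
    nlinarith
  have hσnn : (0:ℝ) ≤ σstar^2 := by
    refine le_trans ?_ hσ
    positivity
  -- sum of gradients at wstar vanishes
  have hFbarfun : Fbar = fun y => (1/(M:ℝ)) * ∑ i, F i y := funext hFbar
  have hdsum : ∀ x : EuclideanSpace ℝ (Fin d),
      DifferentiableAt ℝ (fun y => ∑ i, F i y) x :=
    fun x => DifferentiableAt.fun_sum (fun i _ => (hdiff i x))
  have hlocmin : IsLocalMin Fbar wstar := Filter.Eventually.of_forall hmin
  have hfd0 : fderiv ℝ Fbar wstar = 0 := hlocmin.fderiv_eq_zero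
  have hsum0 : ∑ i, fderiv ℝ (F i) wstar = 0 := by
    have h1 : fderiv ℝ Fbar wstar
        = (1/(M:ℝ)) • fderiv ℝ (fun y => ∑ i, F i y) wstar := by
      rw [hFbarfun]
      exact fderiv_const_mul (hdsum wstar) _
    rw [hfd0, fderiv_fun_sum (fun i _ => hdiff i wstar)] at h1
    have hM0 : (1/(M:ℝ)) ≠ 0 := by positivity
    rcases smul_eq_zero.mp h1.symm with h | h
    · exact absurd h hM0
    · exact h
  have hinner0 : ∀ v : EuclideanSpace ℝ (Fin d),
      ∑ i, ⟪gradient (F i) wstar, v⟫_ℝ = 0 := by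
    intro v
    have h1 : ∀ i : Fin M, ⟪gradient (F i) wstar, v⟫_ℝ = fderiv ℝ (F i) wstar v := by
      intro i
      rw [((hdiff i wstar).hasGradientAt.hasFDerivAt).fderiv]
      rfl
    simp_rw [h1]
    rw [← ContinuousLinearMap.sum_apply, hsum0]
    simp
  -- per-round inequality
  have round : ∀ t, t < T → ‖w (t+1) - wstar‖^2 ≤ ‖w t - wstar‖^2 +
      ηg t * (-(ηl * τ) * (Fbar (w t) - Fbar wstar) + 3 * ηl^2 * τ^2 * σstar^2) := by
    intro t ht
    have hpc : ∀ i, -2 * ⟪Δ t i, w t - wstar⟫_ℝ + ‖Δ t i‖^2 ≤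
        -2*ηl*τ*(F i (w t) - F i wstar) + 3*ηl^2*τ^2*
          (‖gradient (F i) (w t) - gradient (F i) wstar‖^2 + ‖gradient (F i) wstar‖^2) := by
      intro i
      have hx0 := hwloc0 t ht i
      have hΔi := hΔ t ht i
      have h := fedexp_per_client (F i) (hdiff i) (hconv i) hL0 hηl τ hτ hηLτ (hsmooth i)
        wstar (wloc t i) (hwlocrec t ht i)
      rw [hx0] at h
      rw [← hΔi] at h
      exact h
    have hco : ∀ i : Fin M, ‖gradient (F i) (w t) - gradient (F i) wstar‖^2 ≤
        2*L*(F i (w t) - F i wstar - ⟪gradient (F i) wstar, w t - wstar⟫_ℝ) :=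
      fun i => fedexp_cocoercive (F i) (hdiff i) (hconv i) hL0 (hsmooth i) (w t) wstar
    set v : EuclideanSpace ℝ (Fin d) := w t - wstar with hv
    set D : ℝ := Fbar (w t) - Fbar wstar with hD
    have hDnn : 0 ≤ D := sub_nonneg.mpr (hmin (w t))
    have hMD : (M:ℝ) * D = ∑ i, (F i (w t) - F i wstar) := by
      rw [hD, hFbar, hFbar, Finset.sum_sub_distrib]
      field_simp
    have hG : ∑ i, ‖gradient (F i) (w t) - gradient (F i) wstar‖^2 ≤ 2*L*((M:ℝ)*D) := by
      calc ∑ i, ‖gradient (F i) (w t) - gradient (F i) wstar‖^2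
          ≤ ∑ i, 2*L*(F i (w t) - F i wstar - ⟪gradient (F i) wstar, v⟫_ℝ) :=
            Finset.sum_le_sum (fun i _ => hco i)
        _ = 2*L*((M:ℝ)*D) := by
            rw [← Finset.mul_sum, Finset.sum_sub_distrib, hinner0 v, ← hMD]
            ring
    have hMne : (M:ℝ) ≠ 0 := ne_of_gt hMR
    have hσM : ∑ i, ‖gradient (F i) wstar‖^2 ≤ (M:ℝ) * σstar^2 := by
      have h1 := mul_le_mul_of_nonneg_left hσ hMR.le
      have e : (M:ℝ) * (1 / (M:ℝ) * ∑ i, ‖gradient (F i) wstar‖ ^ 2)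
          = ∑ i, ‖gradient (F i) wstar‖ ^ 2 := by field_simp
      rw [e] at h1
      exact h1
    have hsumpc : ∑ i, (-2 * ⟪Δ t i, v⟫_ℝ + ‖Δ t i‖^2) ≤
        (M:ℝ) * (-(2*ηl*τ)*D + 3*ηl^2*τ^2*(2*L*D + σstar^2)) := by
      calc ∑ i, (-2 * ⟪Δ t i, v⟫_ℝ + ‖Δ t i‖^2)
          ≤ ∑ i, (-2*ηl*τ*(F i (w t) - F i wstar) + 3*ηl^2*τ^2*
            (‖gradient (F i) (w t) - gradient (F i) wstar‖^2 + ‖gradient (F i) wstar‖^2)) :=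
            Finset.sum_le_sum (fun i _ => hpc i)
        _ = -2*ηl*τ*((M:ℝ)*D) + 3*ηl^2*τ^2*
            ((∑ i, ‖gradient (F i) (w t) - gradient (F i) wstar‖^2) +
             (∑ i, ‖gradient (F i) wstar‖^2)) := by
            rw [Finset.sum_add_distrib, ← Finset.mul_sum, ← Finset.mul_sum, ← hMD,
              Finset.sum_add_distrib]
        _ ≤ (M:ℝ) * (-(2*ηl*τ)*D + 3*ηl^2*τ^2*(2*L*D + σstar^2)) := by
            have h3 : (0:ℝ) ≤ 3*ηl^2*τ^2 := by positivity
            nlinarith [hG, hσM]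
    -- server step
    have hw1 : ‖w (t+1) - wstar‖^2
        = ‖v‖^2 - 2 * ηg t * ⟪v, Δbar t⟫_ℝ + (ηg t)^2 * ‖Δbar t‖^2 := by
      rw [hwrec t ht]
      have e : w t - ηg t • Δbar t - wstar = v - ηg t • Δbar t := by
        rw [hv]; abel
      rw [e, norm_sub_sq_real, real_inner_smul_right, norm_smul, Real.norm_eq_abs,
        mul_pow, sq_abs]
      ring
    have hgpos : (0:ℝ) < ηg t := lt_of_lt_of_le one_pos (hηg1 t ht)
    have hub : (ηg t)^2 * ‖Δbar t‖^2 ≤ (ηg t / M) * ∑ i, ‖Δ t i‖^2 := by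
      have h1 := hηgub t ht
      have h2 : (0:ℝ) ≤ ηg t / M := by positivity
      calc (ηg t)^2 * ‖Δbar t‖^2 = (ηg t / M) * ((M:ℝ) * ηg t * ‖Δbar t‖^2) := by
            field_simp
        _ ≤ (ηg t / M) * ∑ i, ‖Δ t i‖^2 := mul_le_mul_of_nonneg_left h1 h2
    have hbar : ⟪v, Δbar t⟫_ℝ = (1/(M:ℝ)) * ∑ i, ⟪Δ t i, v⟫_ℝ := by
      rw [hΔbar t ht, real_inner_smul_right, inner_sum]
      congr 1
      exact Finset.sum_congr rfl (fun i _ => real_inner_comm _ _)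
    have hfin : ‖w (t+1) - wstar‖^2 ≤ ‖v‖^2 +
        (ηg t / M) * ∑ i, (-2 * ⟪Δ t i, v⟫_ℝ + ‖Δ t i‖^2) := by
      rw [hw1, hbar]
      have e1 : ∑ i, (-2 * ⟪Δ t i, v⟫_ℝ + ‖Δ t i‖^2)
          = -2 * (∑ i, ⟪Δ t i, v⟫_ℝ) + ∑ i, ‖Δ t i‖^2 := by
        rw [Finset.sum_add_distrib, ← Finset.mul_sum]
      have e2 : (ηg t / M) * ∑ i, (-2 * ⟪Δ t i, v⟫_ℝ + ‖Δ t i‖^2)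
          = -2 * ηg t * ((1/(M:ℝ)) * ∑ i, ⟪Δ t i, v⟫_ℝ)
            + (ηg t / M) * ∑ i, ‖Δ t i‖^2 := by
        rw [e1]
        ring
      rw [e2]
      linarith [hub]
    have hstep : (ηg t / M) * ∑ i, (-2 * ⟪Δ t i, v⟫_ℝ + ‖Δ t i‖^2) ≤
        ηg t * (-(ηl * τ) * D + 3 * ηl^2 * τ^2 * σstar^2) := by
      have h1 : (ηg t / M) * ∑ i, (-2 * ⟪Δ t i, v⟫_ℝ + ‖Δ t i‖^2) ≤
          (ηg t / M) * ((M:ℝ) * (-(2*ηl*τ)*D + 3*ηl^2*τ^2*(2*L*D + σstar^2))) :=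
        mul_le_mul_of_nonneg_left hsumpc (by positivity)
      have h2 : (ηg t / M) * ((M:ℝ) * (-(2*ηl*τ)*D + 3*ηl^2*τ^2*(2*L*D + σstar^2)))
          = ηg t * (-(2*ηl*τ)*D + 3*ηl^2*τ^2*(2*L*D + σstar^2)) := by
        field_simp
      rw [h2] at h1
      refine h1.trans ?_
      apply mul_le_mul_of_nonneg_left _ hgpos.le
      have hkey : 6 * ηl^2 * τ^2 * L ≤ ηl * τ := by
        have h4 := mul_le_mul_of_nonneg_left hηLτ (by positivity : (0:ℝ) ≤ 6*ηl*τ)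
        nlinarith
      nlinarith [mul_nonneg (sub_nonneg.mpr hkey) hDnn]
    calc ‖w (t+1) - wstar‖^2 ≤ ‖v‖^2 +
          (ηg t / M) * ∑ i, (-2 * ⟪Δ t i, v⟫_ℝ + ‖Δ t i‖^2) := hfin
      _ ≤ ‖v‖^2 + ηg t * (-(ηl * τ) * D + 3 * ηl^2 * τ^2 * σstar^2) := by linarith
  -- telescoping
  set A : ℝ := ∑ t ∈ Finset.range T, ηg t with hA
  set B : ℝ := ∑ t ∈ Finset.range T, ηg t * (Fbar (w t) - Fbar wstar) with hB
  set a : ℕ → ℝ := fun t => ‖w t - wstar‖^2 with ha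
  have key : (ηl*τ) * B ≤ a 0 + 3*ηl^2*τ^2*σstar^2 * A := by
    have h1 : ∀ t ∈ Finset.range T, (ηl*τ) * (ηg t * (Fbar (w t) - Fbar wstar)) ≤
        (a t - a (t+1)) + 3*ηl^2*τ^2*σstar^2 * ηg t := by
      intro t ht'
      have ht := Finset.mem_range.mp ht'
      have := round t ht
      have e : ηg t * (-(ηl * τ) * (Fbar (w t) - Fbar wstar) + 3 * ηl^2 * τ^2 * σstar^2)
          = -((ηl*τ) * (ηg t * (Fbar (w t) - Fbar wstar)))
            + 3*ηl^2*τ^2*σstar^2 * ηg t := by ring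
      rw [e] at this
      simp only [ha]
      linarith
    calc (ηl*τ) * B = ∑ t ∈ Finset.range T, (ηl*τ) * (ηg t * (Fbar (w t) - Fbar wstar)) := by
          rw [hB, Finset.mul_sum]
      _ ≤ ∑ t ∈ Finset.range T, ((a t - a (t+1)) + 3*ηl^2*τ^2*σstar^2 * ηg t) :=
          Finset.sum_le_sum h1
      _ = (a 0 - a T) + 3*ηl^2*τ^2*σstar^2 * A := by
          rw [Finset.sum_add_distrib, Finset.sum_range_sub' a T, hA, ← Finset.mul_sum]
      _ ≤ a 0 + 3*ηl^2*τ^2*σstar^2 * A := by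
          have : 0 ≤ a T := sq_nonneg _
          linarith
  have hηlτpos : (0:ℝ) < ηl * τ := by positivity
  have hlast : (0:ℝ) ≤ 36 * ηl ^ 2 * τ * ((τ:ℝ) - 1) * L * σstar ^ 2 := by
    have h1 : (0:ℝ) ≤ (τ:ℝ) - 1 := by linarith
    have h2 : (0:ℝ) ≤ 36 * ηl ^ 2 * (τ:ℝ) := by positivity
    have := mul_nonneg (mul_nonneg (mul_nonneg h2 h1) hL0.le) hσnn
    linarith
  rcases Nat.eq_zero_or_pos T with hT | hT
  · subst hT
    have hA0 : A = 0 := by rw [hA]; simp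
    have hB0 : B = 0 := by rw [hB]; simp
    rw [hA0, hB0]
    rw [div_zero, mul_zero, div_zero]
    have h9 : (0:ℝ) ≤ 9 * ηl * τ * σstar^2 := by positivity
    linarith
  · have hApos : (0:ℝ) < A := by
      have h1 : (T:ℝ) ≤ A := by
        rw [hA]
        calc (T:ℝ) = ∑ t ∈ Finset.range T, (1:ℝ) := by simp
          _ ≤ ∑ t ∈ Finset.range T, ηg t :=
            Finset.sum_le_sum (fun t ht' => hηg1 t (Finset.mem_range.mp ht'))
      have h2 : (1:ℝ) ≤ (T:ℝ) := Nat.one_le_cast.mpr hT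
      linarith
    have ha0 : (0:ℝ) ≤ a 0 := sq_nonneg _
    have hBbound : B ≤ a 0 / (ηl*τ) + 3*ηl*τ*σstar^2 * A := by
      rw [← sub_le_iff_le_add, le_div_iff₀ hηlτpos]
      nlinarith [key]
    have h3 : B / A ≤ a 0 / (ηl*τ*A) + 3*ηl*τ*σstar^2 := by
      rw [div_le_iff₀ hApos]
      have e : (a 0 / (ηl*τ*A) + 3*ηl*τ*σstar^2) * A
          = a 0 / (ηl*τ) + 3*ηl*τ*σstar^2 * A := by
        field_simp
      rw [e]
      exact hBbound
    have h4 : a 0 / (ηl*τ*A) ≤ 3 * a 0 / (ηl*τ*A) := by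
      apply div_le_div_of_nonneg_right ?_ (by positivity)
      · linarith
    have h5 : 3*ηl*τ*σstar^2 ≤ 9*ηl*τ*σstar^2 := by nlinarith
    calc B / A ≤ a 0 / (ηl*τ*A) + 3*ηl*τ*σstar^2 := h3
      _ ≤ 3 * a 0 / (ηl*τ*A) + 9 * ηl * τ * σstar ^ 2
          + 36 * ηl ^ 2 * τ * ((τ:ℝ) - 1) * L * σstar ^ 2 := by linarith
end

section
/- (Per-round descent inequality of FedExP in the convex case.) Let F_1, …, F_M : ℝ^d → ℝ be convex, differentiable and L-smooth, let F = (1/M)Σ_{i=1}^M F_i, let w* be a minimizer of F, and assume (1/M) Σ_{i=1}^M ‖∇F_i(w*)‖² ≤ σ*². Fix τ ≥ 1 and 0 < η_l ≤ 1/(6τL). Given w^{(t)} ∈ ℝ^d, define local full-batch gradient descent iterates w_i^{(t,0)} = w^{(t)}, w_i^{(t,k+1)} = w_i^{(t,k)} − η_l ∇F_i(w_i^{(t,k)}) for k = 0,…,τ−1, client updates Δ_i^{(t)} = w^{(t)} − w_i^{(t,τ)}, Δ̄^{(t)} = (1/M)Σ_{i=1}^M Δ_i^{(t)}, and w^{(t+1)}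 = w^{(t)} − η_g^{(t)} Δ̄^{(t)}, where η_g^{(t)} ≥ 0 satisfies M η_g^{(t)} ‖Δ̄^{(t)}‖² ≤ Σ_{i=1}^M ‖Δ_i^{(t)}‖². Then ‖w^{(t+1)} − w*‖² ≤ ‖w^{(t)} − w*‖² − (η_g^{(t)} η_l τ / 3)(F(w^{(t)}) − F(w*)) + 3 η_g^{(t)} η_l² τ² σ*² + 12 η_g^{(t)} η_l³ τ²(τ−1) L σ*². -/
open InnerProductSpace Finset

section aux
variable {E : Type*} [NormedAddCommGroup E] [InnerProductSpace ℝ E] [CompleteSpace E]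


lemma line_hasDerivAt (f : E → ℝ) (hd : Differentiable ℝ f) (x v : E) (t : ℝ) :
    HasDerivAt (fun s : ℝ => f (x + s • v)) (inner ℝ (gradient f (x + t • v)) v : ℝ) t := by
  have hline : HasDerivAt (fun s : ℝ => x + s • v) v t := by
    simpa using ((hasDerivAt_id t).smul_const v).const_add x
  have hg := (hd (x + t • v)).hasGradientAt
  rw [hasGradientAt_iff_hasFDerivAt] at hg
  have := hg.comp_hasDerivAt t hline
  simpa [InnerProductSpace.toDual_apply_apply, Function.comp_def] using this

lemma convex_grad_le (f : E → ℝ) (hc : ConvexOn ℝ Set.univ f) (hd : Differentiable ℝ f)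
    (x y : E) : f x + inner ℝ (gradient f x) (y - x) ≤ f y := by
  set v := y - x with hv
  have hxy : x + v = y := by rw [hv]; abel
  have hφc : ConvexOn ℝ Set.univ (fun t : ℝ => f (x + t • v)) := by
    have h1 := hc.comp_affineMap (AffineMap.lineMap x y : ℝ →ᵃ[ℝ] E)
    simp only [Set.preimage_univ] at h1
    have heq : (fun t : ℝ => f (x + t • v)) = f ∘ (AffineMap.lineMap x y : ℝ →ᵃ[ℝ] E) := by
      funext t
      simp only [Function.comp_apply, AffineMap.lineMap_apply_module, hv]
      congr 1
      module
    rw [heq]; exact h1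
  have hder : HasDerivWithinAt (fun t : ℝ => f (x + t • v))
      (inner ℝ (gradient f x) v : ℝ) (Set.Ioi 0) 0 := by
    have := line_hasDerivAt f hd x v 0
    simpa using this.hasDerivWithinAt
  have h2 := hφc.le_slope_of_hasDerivWithinAt_Ioi (Set.mem_univ (0:ℝ)) (Set.mem_univ (1:ℝ))
    one_pos hder
  simp [slope_def_field, hxy, -inner_gradient_left] at h2
  linarith

lemma descent_lemma (f : E → ℝ) (hd : Differentiable ℝ f) {L : ℝ} (hL : 0 ≤ L)
    (hlip : ∀ w w' : E, ‖gradient f w - gradient f w'‖ ≤ L * ‖w - w'‖) (x y : E) :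
    f y ≤ f x + inner ℝ (gradient f x) (y - x) + L / 2 * ‖y - x‖ ^ 2 := by
  set v := y - x with hv
  have hxy : x + v = y := by rw [hv]; abel
  set χ : ℝ → ℝ := fun t => f (x + t • v) - t * inner ℝ (gradient f x) v - L / 2 * t ^ 2 * ‖v‖ ^ 2
    with hχ
  have hderiv : ∀ t : ℝ, HasDerivAt χ
      ((inner ℝ (gradient f (x + t • v)) v : ℝ) - inner ℝ (gradient f x) v - L * t * ‖v‖ ^ 2) t := by
    intro t
    have h1 := line_hasDerivAt f hd x v t
    have h2 : HasDerivAt (fun t : ℝ => t * (inner ℝ (gradient f x) v : ℝ))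
        (inner ℝ (gradient f x) v : ℝ) t := by simpa using (hasDerivAt_id t).mul_const _
    have h3 : HasDerivAt (fun t : ℝ => L / 2 * t ^ 2 * ‖v‖ ^ 2) (L * t * ‖v‖ ^ 2) t := by
      have := ((hasDerivAt_pow 2 t).const_mul (L / 2)).mul_const (‖v‖ ^ 2)
      exact this.congr_deriv (by ring)
    exact (h1.sub h2).sub h3
  have hanti : AntitoneOn χ (Set.Icc (0:ℝ) 1) := by
    apply antitoneOn_of_deriv_nonpos (convex_Icc 0 1)
    · exact (Differentiable.continuous (fun t => (hderiv t).differentiableAt)).continuousOn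
    · intro t ht
      exact (hderiv t).differentiableAt.differentiableWithinAt
    · intro t ht
      rw [(hderiv t).deriv]
      rw [interior_Icc] at ht
      have hb : (inner ℝ (gradient f (x + t • v)) v : ℝ) - inner ℝ (gradient f x) v ≤ L * t * ‖v‖ ^ 2 := by
        have h4 : (inner ℝ (gradient f (x + t • v)) v : ℝ) - inner ℝ (gradient f x) v
            = inner ℝ (gradient f (x + t • v) - gradient f x) v := by
          rw [inner_sub_left]
        rw [h4]
        calc (inner ℝ (gradient f (x + t • v) - gradient f x) v : ℝ)
            ≤ ‖gradient f (x + t • v) - gradient f x‖ * ‖v‖ := real_inner_le_norm _ _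
          _ ≤ (L * ‖x + t • v - x‖) * ‖v‖ := by
              apply mul_le_mul_of_nonneg_right (hlip _ _) (norm_nonneg _)
          _ = L * t * ‖v‖ ^ 2 := by
              have : x + t • v - x = t • v := by abel
              rw [this, norm_smul, Real.norm_eq_abs, abs_of_pos ht.1]; ring
      linarith
  have h01 := hanti (Set.mem_Icc.mpr ⟨le_refl 0, zero_le_one⟩)
    (Set.mem_Icc.mpr ⟨zero_le_one, le_refl 1⟩) zero_le_one
  simp only [hχ, hxy] at h01
  simp [-inner_gradient_left] at h01
  rw [hxy] at h01
  linarith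

lemma cocoercivity (f : E → ℝ) (hc : ConvexOn ℝ Set.univ f) (hd : Differentiable ℝ f)
    {L : ℝ} (hL : 0 < L)
    (hlip : ∀ w w' : E, ‖gradient f w - gradient f w'‖ ≤ L * ‖w - w'‖) (x y : E) :
    ‖gradient f x - gradient f y‖ ^ 2 ≤ 2 * L * (f x - f y - inner ℝ (gradient f y) (x - y)) := by
  set gy := gradient f y with hgy
  set φ : E → ℝ := fun w => f w - inner ℝ gy w with hφ
  have hφd : Differentiable ℝ φ := hd.sub ((InnerProductSpace.toDual ℝ E gy).differentiable)
  have hφgrad : ∀ w, gradient φ w = gradient f w - gy := by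
    intro w
    have h1 : HasFDerivAt φ ((InnerProductSpace.toDual ℝ E) (gradient f w - gy)) w := by
      have hf1 := hasGradientAt_iff_hasFDerivAt.mp (hd w).hasGradientAt
      have hf2 := (InnerProductSpace.toDual ℝ E gy).hasFDerivAt (x := w)
      have := hf1.sub hf2
      rw [map_sub]
      exact this
    exact (hasGradientAt_iff_hasFDerivAt.mpr h1).gradient
  have hφc : ConvexOn ℝ Set.univ φ := by
    refine ⟨convex_univ, fun a _ b _ p q hp hq hpq => ?_⟩
    have := hc.2 (Set.mem_univ a) (Set.mem_univ b) hp hq hpq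
    simp only [hφ, smul_eq_mul] at *
    rw [inner_add_right, real_inner_smul_right, real_inner_smul_right]
    linarith
  have hφlip : ∀ w w' : E, ‖gradient φ w - gradient φ w'‖ ≤ L * ‖w - w'‖ := by
    intro w w'
    rw [hφgrad, hφgrad]
    simpa using hlip w w'
  set g := gradient f x - gy with hg
  have key1 : φ y ≤ φ (x - (1 / L) • g) := by
    have := convex_grad_le φ hφc hφd y (x - (1 / L) • g)
    rw [hφgrad y] at this
    simp [hgy] at this
    convert this using 2
    simp [hgy]
  have key2 : φ (x - (1 / L) • g) ≤ φ x - 1 / (2 * L) * ‖g‖ ^ 2 := by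
    have := descent_lemma φ hφd hL.le hφlip x (x - (1 / L) • g)
    rw [hφgrad x, ← hg] at this
    have he : x - (1 / L) • g - x = -((1 / L) • g) := by abel
    rw [he] at this
    rw [inner_neg_right, real_inner_smul_right, real_inner_self_eq_norm_sq] at this
    rw [norm_neg, norm_smul, Real.norm_eq_abs, abs_of_pos (by positivity : (0:ℝ) < 1 / L)]
      at this
    have hL' : L ≠ 0 := hL.ne'
    calc φ (x - (1 / L) • g) ≤ φ x - 1 / L * ‖g‖ ^ 2 + L / 2 * (1 / L * ‖g‖) ^ 2 := by
          linarith
      _ = φ x - 1 / (2 * L) * ‖g‖ ^ 2 := by field_simp; ring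
  have hφxy : φ x - φ y = f x - f y - inner ℝ gy (x - y) := by
    simp [hφ, inner_sub_right]
    ring
  have : 1 / (2 * L) * ‖g‖ ^ 2 ≤ φ x - φ y := by linarith
  rw [hφxy] at this
  have h2L : 0 < 2 * L := by linarith
  calc ‖g‖ ^ 2 = 2 * L * (1 / (2 * L) * ‖g‖ ^ 2) := by field_simp
    _ ≤ 2 * L * (f x - f y - inner ℝ gy (x - y)) := by
        exact mul_le_mul_of_nonneg_left this h2L.le

end aux

set_option maxHeartbeats 2000000 in
/-- Per-round descent inequality of FedExP in the convex case. -/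
theorem fedexp_convex_per_round_descent {d M : ℕ} (hM : 0 < M)
    (F : Fin M → EuclideanSpace ℝ (Fin d) → ℝ)
    (Fbar : EuclideanSpace ℝ (Fin d) → ℝ)
    (hFbar : ∀ w, Fbar w = (1 / (M : ℝ)) * ∑ i, F i w)
    (L ηl σstar : ℝ) (τ : ℕ) (hτ : 1 ≤ τ)
    (hconv : ∀ i, ConvexOn ℝ Set.univ (F i)) (hdiff : ∀ i, Differentiable ℝ (F i))
    (hsmooth : ∀ i, ∀ w w' : EuclideanSpace ℝ (Fin d),
      ‖gradient (F i) w - gradient (F i) w'‖ ≤ L * ‖w - w'‖)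
    (wstar : EuclideanSpace ℝ (Fin d)) (hmin : ∀ w, Fbar wstar ≤ Fbar w)
    (hσ : (1 / (M : ℝ)) * ∑ i, ‖gradient (F i) wstar‖ ^ 2 ≤ σstar ^ 2)
    (hηl : 0 < ηl) (hηlL : ηl ≤ 1 / (6 * τ * L))
    (wt : EuclideanSpace ℝ (Fin d))
    (wloc : Fin M → ℕ → EuclideanSpace ℝ (Fin d))
    (hwloc0 : ∀ i, wloc i 0 = wt)
    (hwlocrec : ∀ i, ∀ k < τ,
      wloc i (k + 1) = wloc i k - ηl • gradient (F i) (wloc i k))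
    (Δ : Fin M → EuclideanSpace ℝ (Fin d)) (hΔ : ∀ i, Δ i = wt - wloc i τ)
    (Δbar : EuclideanSpace ℝ (Fin d)) (hΔbar : Δbar = (1 / (M : ℝ)) • ∑ i, Δ i)
    (ηg : ℝ) (hηg0 : 0 ≤ ηg)
    (hηgub : (M : ℝ) * ηg * ‖Δbar‖ ^ 2 ≤ ∑ i, ‖Δ i‖ ^ 2)
    (wnext : EuclideanSpace ℝ (Fin d)) (hwnext : wnext = wt - ηg • Δbar) :
    ‖wnext - wstar‖ ^ 2 ≤ ‖wt - wstar‖ ^ 2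
      - (ηg * ηl * τ / 3) * (Fbar wt - Fbar wstar)
      + 3 * ηg * ηl ^ 2 * τ ^ 2 * σstar ^ 2
      + 12 * ηg * ηl ^ 3 * τ ^ 2 * (τ - 1) * L * σstar ^ 2 := by
  -- basic positivity facts
  have hτR : (1:ℝ) ≤ (τ:ℝ) := by exact_mod_cast hτ
  have hτ0 : (0:ℝ) < (τ:ℝ) := by linarith
  have hm : (0:ℝ) < (M:ℝ) := by exact_mod_cast hM
  have hL : 0 < L := by
    by_contra hneg
    push_neg at hneg
    have h6 : 6 * (τ:ℝ) * L ≤ 0 := by nlinarith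
    have : 1 / (6 * (τ:ℝ) * L) ≤ 0 := one_div_nonpos.mpr h6
    linarith
  have hηlLτ : ηl * L * (τ:ℝ) ≤ 1 / 6 := by
    have h6 : (0:ℝ) < 6 * (τ:ℝ) * L := by positivity
    rw [le_div_iff₀ h6] at hηlL
    nlinarith
  set v : EuclideanSpace ℝ (Fin d) := wt - wstar with hv
  set g : Fin M → ℕ → EuclideanSpace ℝ (Fin d) := fun i k => gradient (F i) (wloc i k) with hg
  set gt : Fin M → EuclideanSpace ℝ (Fin d) := fun i => gradient (F i) wt with hgt
  set gs : Fin M → EuclideanSpace ℝ (Fin d) := fun i => gradient (F i) wstar with hgs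
  set h : ℝ := Fbar wt - Fbar wstar with hh
  have hh0 : 0 ≤ h := by rw [hh]; linarith [hmin wt]
  set P : ℝ := ∑ i, (inner ℝ (Δ i) v : ℝ) with hP
  set Q : ℝ := ∑ i, ‖Δ i‖ ^ 2 with hQdef
  set Γ : ℝ := ∑ i, ‖gt i‖ ^ 2 with hΓdef
  have hΓ0 : 0 ≤ Γ := Finset.sum_nonneg fun i _ => by positivity
  set K2 : ℝ := ∑ k ∈ Finset.range τ, (k:ℝ) ^ 2 with hK2def
  have hK20 : 0 ≤ K2 := Finset.sum_nonneg fun k _ => by positivity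
  have hK2ub : K2 ≤ (τ:ℝ) ^ 2 * ((τ:ℝ) - 1) := by
    have h1 : K2 ≤ ∑ _k ∈ Finset.range τ, ((τ:ℝ) - 1) ^ 2 := by
      apply Finset.sum_le_sum
      intro k hk
      have : (k:ℝ) ≤ (τ:ℝ) - 1 := by
        have := Finset.mem_range.mp hk
        have : (k:ℝ) + 1 ≤ (τ:ℝ) := by exact_mod_cast this
        linarith
      have hk0 : (0:ℝ) ≤ (k:ℝ) := Nat.cast_nonneg k
      nlinarith
    rw [Finset.sum_const, Finset.card_range, nsmul_eq_mul] at h1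
    nlinarith
  -- telescoping : Δ i = ηl • ∑_{k<τ} g i k
  have hΔsum : ∀ i, Δ i = ηl • ∑ k ∈ Finset.range τ, g i k := by
    intro i
    have key : ∀ n, n ≤ τ → wt - wloc i n = ηl • ∑ k ∈ Finset.range n, g i k := by
      intro n
      induction n with
      | zero => intro _; simp [hwloc0 i]
      | succ n ih =>
        intro hn
        have hn' : n < τ := Nat.lt_of_succ_le hn
        have := hwlocrec i n hn'
        rw [Finset.sum_range_succ, smul_add, ← ih (Nat.le_of_lt hn'), this]
        simp [hg]
        abel
    rw [hΔ i, key τ le_rfl]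
  -- drift bound
  have hdrift : ∀ i, ∀ k, k ≤ τ → ‖wloc i k - wt‖ ≤ 6/5 * ηl * k * ‖gt i‖ := by
    intro i k
    induction k with
    | zero => intro _; simp [hwloc0 i]
    | succ k ih =>
      intro hk
      have hk' : k < τ := Nat.lt_of_succ_le hk
      have ihk := ih (Nat.le_of_lt hk')
      have hrec := hwlocrec i k hk'
      have hgb : ‖g i k‖ ≤ L * ‖wloc i k - wt‖ + ‖gt i‖ := by
        calc ‖g i k‖ = ‖(g i k - gt i) + gt i‖ := by congr 1; abel
          _ ≤ ‖g i k - gt i‖ + ‖gt i‖ := norm_add_le _ _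
          _ ≤ L * ‖wloc i k - wt‖ + ‖gt i‖ := by
              have := hsmooth i (wloc i k) wt
              simp only [hg, hgt] at *
              linarith
      have hstep : ‖wloc i (k+1) - wt‖ ≤ ‖wloc i k - wt‖ + ηl * ‖g i k‖ := by
        rw [hrec]
        have : wloc i k - ηl • g i k - wt = (wloc i k - wt) - ηl • g i k := by
          simp [hg]; abel
        rw [this]
        calc ‖(wloc i k - wt) - ηl • g i k‖ ≤ ‖wloc i k - wt‖ + ‖ηl • g i k‖ :=
              norm_sub_le _ _
          _ = ‖wloc i k - wt‖ + ηl * ‖g i k‖ := by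
              rw [norm_smul, Real.norm_eq_abs, abs_of_pos hηl]
      have hηlLk : ηl * L * ((k:ℝ) + 1) ≤ 1/6 := by
        have : ((k:ℝ) + 1) ≤ (τ:ℝ) := by exact_mod_cast hk
        nlinarith
      have hG0 : (0:ℝ) ≤ ‖gt i‖ := norm_nonneg _
      have hD0 : (0:ℝ) ≤ ‖wloc i k - wt‖ := norm_nonneg _
      push_cast
      have h1 := mul_le_mul_of_nonneg_left hgb hηl.le
      have h2 := mul_le_mul_of_nonneg_left ihk (mul_nonneg hηl.le hL.le)
      have h4 := mul_le_mul_of_nonneg_left (mul_le_mul_of_nonneg_right hηlLk hG0) hηl.le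
      have h5 : (0:ℝ) ≤ ηl * (ηl * L) * ‖gt i‖ :=
        mul_nonneg (mul_nonneg hηl.le (mul_nonneg hηl.le hL.le)) hG0
      nlinarith [hstep, h1, h2, h4, h5]
  -- gradient norm bound along trajectory
  have hgnorm : ∀ i, ∀ k, k < τ → ‖g i k‖ ≤ 6/5 * ‖gt i‖ := by
    intro i k hk
    have hd := hdrift i k (Nat.le_of_lt hk)
    have hkτ : (k:ℝ) ≤ (τ:ℝ) - 1 := by
      have : (k:ℝ) + 1 ≤ (τ:ℝ) := by exact_mod_cast hk
      linarith
    have hηlLk : ηl * L * (k:ℝ) ≤ 1/6 := by nlinarith [Nat.cast_nonneg (α := ℝ) k]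
    have hG0 : (0:ℝ) ≤ ‖gt i‖ := norm_nonneg _
    calc ‖g i k‖ = ‖(g i k - gt i) + gt i‖ := by congr 1; abel
      _ ≤ ‖g i k - gt i‖ + ‖gt i‖ := norm_add_le _ _
      _ ≤ L * ‖wloc i k - wt‖ + ‖gt i‖ := by
          have := hsmooth i (wloc i k) wt
          simp only [hg, hgt] at *
          linarith
      _ ≤ 6/5 * ‖gt i‖ := by
          have h2 := mul_le_mul_of_nonneg_left hd hL.le
          have h3 := mul_le_mul_of_nonneg_right hηlLk hG0
          nlinarith [h2, h3]
  clear_value h P Q Γ K2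
  -- sum of gradients at the minimizer vanishes
  have hsum0 : ∑ i, gs i = 0 := by
    have hsF : ∀ w : EuclideanSpace ℝ (Fin d), (∑ i, F i w) = (M:ℝ) * Fbar w := by
      intro w
      rw [hFbar w]
      field_simp
    have hlocmin : IsLocalMin (fun w => ∑ i, F i w) wstar := by
      apply Filter.Eventually.of_forall
      intro w
      show (∑ i, F i wstar) ≤ ∑ i, F i w
      rw [hsF w, hsF wstar]
      exact mul_le_mul_of_nonneg_left (hmin w) hm.le
    have hfd : HasFDerivAt (fun w => ∑ i, F i w)
        (InnerProductSpace.toDual ℝ (EuclideanSpace ℝ (Fin d)) (∑ i, gs i)) wstar := by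
      rw [map_sum]
      exact HasFDerivAt.fun_sum fun i _ =>
        hasGradientAt_iff_hasFDerivAt.mp ((hdiff i) wstar).hasGradientAt
    have hzero := hlocmin.hasFDerivAt_eq_zero hfd
    have := congrArg (fun f => (InnerProductSpace.toDual ℝ (EuclideanSpace ℝ (Fin d))).symm f)
      hzero
    simpa using this
  set SF : ℝ := (∑ i, F i wt) - ∑ i, F i wstar with hSFdef
  have hSF : SF = (M:ℝ) * h := by
    rw [hSFdef, hh, hFbar wt, hFbar wstar]
    field_simp
  have hcoco : ∀ i, ‖gt i - gs i‖^2 ≤ 2*L*(F i wt - F i wstar - (inner ℝ (gs i) v : ℝ)) :=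
    fun i => cocoercivity (F i) (hconv i) (hdiff i) hL (hsmooth i) wt wstar
  have hinner0 : ∑ i, (inner ℝ (gs i) v : ℝ) = 0 := by
    rw [← sum_inner, hsum0, inner_zero_left]
  have hσ' : ∑ i, ‖gs i‖^2 ≤ (M:ℝ)*σstar^2 := by
    have h2 := mul_le_mul_of_nonneg_left hσ hm.le
    calc ∑ i, ‖gs i‖^2 = (M:ℝ) * (1 / (M:ℝ) * ∑ i, ‖gs i‖^2) := by field_simp
      _ ≤ (M:ℝ) * σstar^2 := h2
  have hΓub : Γ ≤ 4*L*SF + 2*(M:ℝ)*σstar^2 := by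
    have h1 : ∀ i, ‖gt i‖^2 ≤ 2*‖gt i - gs i‖^2 + 2*‖gs i‖^2 := by
      intro i
      have h2 := norm_add_le (gt i - gs i) (gs i)
      have he : gt i - gs i + gs i = gt i := by abel
      rw [he] at h2
      have h3 := mul_self_le_mul_self (norm_nonneg (gt i)) h2
      nlinarith [h3, sq_nonneg (‖gt i - gs i‖ - ‖gs i‖)]
    have hsum2 : ∑ i, (F i wt - F i wstar - (inner ℝ (gs i) v : ℝ)) = SF := by
      rw [Finset.sum_sub_distrib, Finset.sum_sub_distrib, hinner0, hSFdef]
      ring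
    have hcocosum : ∑ i, ‖gt i - gs i‖^2 ≤ 2*L*SF := by
      calc ∑ i, ‖gt i - gs i‖^2
          ≤ ∑ i, 2*L*(F i wt - F i wstar - (inner ℝ (gs i) v : ℝ)) :=
            Finset.sum_le_sum (fun i _ => hcoco i)
        _ = 2*L*SF := by rw [← Finset.mul_sum, hsum2]
    calc Γ = ∑ i, ‖gt i‖^2 := hΓdef
      _ ≤ ∑ i, (2*‖gt i - gs i‖^2 + 2*‖gs i‖^2) := Finset.sum_le_sum (fun i _ => h1 i)
      _ = 2*(∑ i, ‖gt i - gs i‖^2) + 2*(∑ i, ‖gs i‖^2) := by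
          rw [Finset.sum_add_distrib, ← Finset.mul_sum, ← Finset.mul_sum]
      _ ≤ 2*(2*L*SF) + 2*((M:ℝ)*σstar^2) := by
          have := hcocosum
          have := hσ'
          linarith
      _ = 4*L*SF + 2*(M:ℝ)*σstar^2 := by ring
  -- per-(i,k) lower bound on the inner ℝ product
  have hinner1 : ∀ i, ∀ k, k < τ →
      F i wt - F i wstar - 18/25 * L * ηl^2 * (k:ℝ)^2 * ‖gt i‖^2 ≤ (inner ℝ (g i k) v : ℝ) := by
    intro i k hk
    simp only [hg, hgt, hv]
    have cgl := convex_grad_le (F i) (hconv i) (hdiff i) (wloc i k) wstar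
    have dsc := descent_lemma (F i) (hdiff i) hL.le (hsmooth i) (wloc i k) wt
    have hdd := hdrift i k (le_of_lt hk)
    simp only [hg, hgt] at hdd
    have hD2 : ‖wloc i k - wt‖^2 ≤ 36/25*ηl^2*(k:ℝ)^2*‖gradient (F i) wt‖^2 := by
      have h0 := mul_self_le_mul_self (norm_nonneg (wloc i k - wt)) hdd
      calc ‖wloc i k - wt‖^2 = ‖wloc i k - wt‖*‖wloc i k - wt‖ := pow_two _
        _ ≤ (6/5*ηl*(k:ℝ)*‖gradient (F i) wt‖)*(6/5*ηl*(k:ℝ)*‖gradient (F i) wt‖) := h0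
        _ = 36/25*ηl^2*(k:ℝ)^2*‖gradient (F i) wt‖^2 := by ring
    have hsplit : (inner ℝ (gradient (F i) (wloc i k)) (wt - wstar) : ℝ)
        = (inner ℝ (gradient (F i) (wloc i k)) (wt - wloc i k) : ℝ)
          + inner ℝ (gradient (F i) (wloc i k)) (wloc i k - wstar) := by
      rw [← inner_add_right]
      congr 1
      abel
    have hneg : (inner ℝ (gradient (F i) (wloc i k)) (wstar - wloc i k) : ℝ)
        = - inner ℝ (gradient (F i) (wloc i k)) (wloc i k - wstar) := by
      rw [← inner_neg_right]
      congr 1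
      abel
    have hrev : ‖wt - wloc i k‖ = ‖wloc i k - wt‖ := norm_sub_rev _ _
    rw [hneg] at cgl
    rw [hrev] at dsc
    have hL2 : L/2*‖wloc i k - wt‖^2 ≤ 18/25*L*ηl^2*(k:ℝ)^2*‖gradient (F i) wt‖^2 := by
      have h9 := mul_le_mul_of_nonneg_left hD2 (show (0:ℝ) ≤ L/2 by positivity)
      calc L/2*‖wloc i k - wt‖^2 ≤ L/2*(36/25*ηl^2*(k:ℝ)^2*‖gradient (F i) wt‖^2) := h9
        _ = 18/25*L*ηl^2*(k:ℝ)^2*‖gradient (F i) wt‖^2 := by ring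
    rw [hsplit]
    linarith [cgl, dsc, hL2]
  -- lower bound on P
  have hfact : ∀ (c G2 : ℝ), ∑ k ∈ Finset.range τ, (c*(k:ℝ)^2*G2) = c*K2*G2 := by
    intro c G2
    rw [hK2def, Finset.mul_sum, Finset.sum_mul]
  have hPi2 : ∀ i, (τ:ℝ)*(F i wt - F i wstar) - 18/25*L*ηl^2*K2*‖gt i‖^2
      ≤ ∑ k ∈ Finset.range τ, (inner ℝ (g i k) v : ℝ) := by
    intro i
    have hb := Finset.sum_le_sum (fun k hk => hinner1 i k (Finset.mem_range.mp hk))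
    have he1 : ∑ k ∈ Finset.range τ,
        (F i wt - F i wstar - 18/25*L*ηl^2*(k:ℝ)^2*‖gt i‖^2)
        = (τ:ℝ)*(F i wt - F i wstar) - 18/25*L*ηl^2*K2*‖gt i‖^2 := by
      rw [Finset.sum_sub_distrib, Finset.sum_const, Finset.card_range, nsmul_eq_mul]
      have := hfact (18/25*L*ηl^2) (‖gt i‖^2)
      rw [show (∑ k ∈ Finset.range τ, (18/25*L*ηl^2*(k:ℝ)^2*‖gt i‖^2))
          = 18/25*L*ηl^2*K2*‖gt i‖^2 from by rw [← this]]
    rw [← he1]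
    exact hb
  have hPge : ηl * ((τ:ℝ) * SF - 18/25 * L * ηl^2 * K2 * Γ) ≤ P := by
    have hPi : ∀ i, (inner ℝ (Δ i) v : ℝ) = ηl * ∑ k ∈ Finset.range τ, (inner ℝ (g i k) v : ℝ) := by
      intro i
      rw [hΔsum i, real_inner_smul_left, sum_inner]
    have hPeq : P = ηl * ∑ i, ∑ k ∈ Finset.range τ, (inner ℝ (g i k) v : ℝ) := by
      rw [hP, Finset.mul_sum]
      exact Finset.sum_congr rfl fun i _ => hPi i
    have hb2 := Finset.sum_le_sum (fun i (_ : i ∈ Finset.univ) => hPi2 i)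
    have he2 : ∑ i, ((τ:ℝ)*(F i wt - F i wstar) - 18/25*L*ηl^2*K2*‖gt i‖^2)
        = (τ:ℝ)*SF - 18/25*L*ηl^2*K2*Γ := by
      rw [Finset.sum_sub_distrib, ← Finset.mul_sum, ← Finset.mul_sum, hSFdef, hΓdef,
        Finset.sum_sub_distrib]
    rw [hPeq]
    rw [← he2]
    exact mul_le_mul_of_nonneg_left hb2 hηl.le
  -- upper bound on Q
  have hQi : ∀ i, ‖Δ i‖^2 ≤ 36/25*ηl^2*(τ:ℝ)^2*‖gt i‖^2 := by
    intro i
    have hn : ‖Δ i‖ = ηl * ‖∑ k ∈ Finset.range τ, g i k‖ := by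
      rw [hΔsum i, norm_smul, Real.norm_eq_abs, abs_of_pos hηl]
    have h1 : ‖∑ k ∈ Finset.range τ, g i k‖ ≤ ∑ k ∈ Finset.range τ, ‖g i k‖ :=
      norm_sum_le _ _
    have h2 := sq_sum_le_card_mul_sum_sq (s := Finset.range τ) (f := fun k => ‖g i k‖)
    rw [Finset.card_range] at h2
    have h3 : ∑ k ∈ Finset.range τ, ‖g i k‖^2 ≤ (τ:ℝ)*(36/25*‖gt i‖^2) := by
      have h4 : ∀ k ∈ Finset.range τ, ‖g i k‖^2 ≤ 36/25*‖gt i‖^2 := by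
        intro k hk
        have h5 := hgnorm i k (Finset.mem_range.mp hk)
        have h6 := mul_self_le_mul_self (norm_nonneg (g i k)) h5
        calc ‖g i k‖^2 = ‖g i k‖*‖g i k‖ := pow_two _
          _ ≤ (6/5*‖gt i‖)*(6/5*‖gt i‖) := h6
          _ = 36/25*‖gt i‖^2 := by ring
      calc ∑ k ∈ Finset.range τ, ‖g i k‖^2 ≤ ∑ _k ∈ Finset.range τ, (36/25*‖gt i‖^2) :=
            Finset.sum_le_sum h4
        _ = (τ:ℝ)*(36/25*‖gt i‖^2) := by
            rw [Finset.sum_const, Finset.card_range, nsmul_eq_mul]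
    have hs0 : (0:ℝ) ≤ ∑ k ∈ Finset.range τ, ‖g i k‖ :=
      Finset.sum_nonneg fun k _ => norm_nonneg _
    have h6 : ‖∑ k ∈ Finset.range τ, g i k‖^2 ≤ (∑ k ∈ Finset.range τ, ‖g i k‖)^2 := by
      have h7 := mul_self_le_mul_self (norm_nonneg (∑ k ∈ Finset.range τ, g i k)) h1
      calc ‖∑ k ∈ Finset.range τ, g i k‖^2
          = ‖∑ k ∈ Finset.range τ, g i k‖*‖∑ k ∈ Finset.range τ, g i k‖ := pow_two _
        _ ≤ (∑ k ∈ Finset.range τ, ‖g i k‖)*(∑ k ∈ Finset.range τ, ‖g i k‖) := h7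
        _ = (∑ k ∈ Finset.range τ, ‖g i k‖)^2 := (pow_two _).symm
    have h8 : ‖∑ k ∈ Finset.range τ, g i k‖^2 ≤ (τ:ℝ)*((τ:ℝ)*(36/25*‖gt i‖^2)) :=
      le_trans (le_trans h6 h2) (mul_le_mul_of_nonneg_left h3 hτ0.le)
    have h9 := mul_le_mul_of_nonneg_left h8 (sq_nonneg ηl)
    rw [hn, mul_pow]
    calc ηl^2*‖∑ k ∈ Finset.range τ, g i k‖^2 ≤ ηl^2*((τ:ℝ)*((τ:ℝ)*(36/25*‖gt i‖^2))) := h9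
      _ = 36/25*ηl^2*(τ:ℝ)^2*‖gt i‖^2 := by ring
  have hQub : Q ≤ 36/25*ηl^2*(τ:ℝ)^2*Γ := by
    calc Q = ∑ i, ‖Δ i‖^2 := hQdef
      _ ≤ ∑ i, 36/25*ηl^2*(τ:ℝ)^2*‖gt i‖^2 := Finset.sum_le_sum (fun i _ => hQi i)
      _ = 36/25*ηl^2*(τ:ℝ)^2*Γ := by rw [hΓdef, Finset.mul_sum]
  -- expansion of the next iterate distance
  have hvS : wnext - wstar = v - ηg • Δbar := by rw [hwnext, hv]; abel
  have hexp : ‖wnext - wstar‖^2 = ‖v‖^2 - 2*ηg*(inner ℝ v Δbar : ℝ) + ηg^2*‖Δbar‖^2 := by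
    rw [hvS, norm_sub_sq_real, real_inner_smul_right, norm_smul, Real.norm_eq_abs, mul_pow,
      sq_abs]
    ring
  have hinnerbar : (inner ℝ v Δbar : ℝ) = 1/(M:ℝ) * P := by
    rw [hΔbar, real_inner_smul_right, inner_sum, hP]
    congr 1
    exact Finset.sum_congr rfl fun i _ => real_inner_comm _ _
  have hstep2 : ηg^2*‖Δbar‖^2 ≤ 1/(M:ℝ) * (ηg * Q) := by
    have h5 := mul_le_mul_of_nonneg_left hηgub (show (0:ℝ) ≤ ηg/(M:ℝ) by positivity)
    calc ηg^2*‖Δbar‖^2 = ηg/(M:ℝ) * ((M:ℝ)*ηg*‖Δbar‖^2) := by field_simp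
      _ ≤ ηg/(M:ℝ) * Q := h5
      _ = 1/(M:ℝ)*(ηg*Q) := by ring
  -- normalized quantities
  have hγub : Γ/(M:ℝ) ≤ 4*L*h + 2*σstar^2 := by
    rw [hSF] at hΓub
    rw [div_le_iff₀ hm]
    linarith [hΓub]
  have hPdiv : ηl*(τ:ℝ)*h - 18/25*ηl^3*L*K2*(Γ/(M:ℝ)) ≤ 1/(M:ℝ)*P := by
    rw [hSF] at hPge
    have h5 := mul_le_mul_of_nonneg_left hPge (show (0:ℝ) ≤ 1/(M:ℝ) by positivity)
    have heq : 1/(M:ℝ) * (ηl*((τ:ℝ)*((M:ℝ)*h) - 18/25*L*ηl^2*K2*Γ))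
        = ηl*(τ:ℝ)*h - 18/25*ηl^3*L*K2*(Γ/(M:ℝ)) := by
      field_simp
    rw [heq] at h5
    exact h5
  have hQdiv : 1/(M:ℝ)*(ηg*Q) ≤ 36/25*ηg*ηl^2*(τ:ℝ)^2*(Γ/(M:ℝ)) := by
    have h5 := mul_le_mul_of_nonneg_left hQub (show (0:ℝ) ≤ ηg/(M:ℝ) by positivity)
    calc 1/(M:ℝ)*(ηg*Q) = ηg/(M:ℝ)*Q := by ring
      _ ≤ ηg/(M:ℝ)*(36/25*ηl^2*(τ:ℝ)^2*Γ) := h5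
      _ = 36/25*ηg*ηl^2*(τ:ℝ)^2*(Γ/(M:ℝ)) := by ring
  -- combine
  have hmain : ‖wnext - wstar‖^2 ≤ ‖v‖^2 - 2*ηg*(ηl*(τ:ℝ)*h)
      + 36/25*ηg*ηl^2*((τ:ℝ)^2 + ηl*L*K2)*(Γ/(M:ℝ)) := by
    rw [hexp, hinnerbar]
    have h6 := mul_le_mul_of_nonneg_left hPdiv
      (mul_nonneg (by norm_num : (0:ℝ) ≤ 2) hηg0)
    linarith [hstep2, hQdiv, h6]
  have hγ0 : 0 ≤ Γ/(M:ℝ) := div_nonneg hΓ0 hm.le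
  have h7 : 36/25*ηg*ηl^2*((τ:ℝ)^2 + ηl*L*K2)*(Γ/(M:ℝ))
      ≤ 36/25*ηg*ηl^2*((τ:ℝ)^2 + ηl*L*K2)*(4*L*h + 2*σstar^2) := by
    apply mul_le_mul_of_nonneg_left hγub
    have : (0:ℝ) ≤ (τ:ℝ)^2 + ηl*L*K2 := by positivity
    positivity
  have hσpart : 36/25*ηg*ηl^2*((τ:ℝ)^2 + ηl*L*K2)*(2*σstar^2)
      ≤ 3*ηg*ηl^2*(τ:ℝ)^2*σstar^2 + 12*ηg*ηl^3*(τ:ℝ)^2*((τ:ℝ)-1)*L*σstar^2 := by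
    have e1 : (0:ℝ) ≤ ηg*ηl^2*(τ:ℝ)^2*σstar^2 := by positivity
    have e2 := mul_le_mul_of_nonneg_left hK2ub
      (show (0:ℝ) ≤ ηg*ηl^3*L*σstar^2 by positivity)
    have e6 : (0:ℝ) ≤ ηg*ηl^3*L*σstar^2*((τ:ℝ)^2*((τ:ℝ)-1)) := by
      apply mul_nonneg (by positivity)
      apply mul_nonneg (sq_nonneg (τ:ℝ))
      linarith
    linarith [e1, e2, e6]
  have hhpart : 36/25*ηg*ηl^2*((τ:ℝ)^2 + ηl*L*K2)*(4*L*h) ≤ 5/3*(ηg*ηl*(τ:ℝ)*h) := by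
    have hc2 : ηl*L*((τ:ℝ)^2 + ηl*L*K2) ≤ 7/36*(τ:ℝ) := by
      have e3 := mul_le_mul_of_nonneg_left hK2ub
        (show (0:ℝ) ≤ (ηl*L)*(ηl*L) by positivity)
      have h0 : (0:ℝ) ≤ ηl*L*(τ:ℝ) := by positivity
      have e4 : (ηl*L*(τ:ℝ))*(ηl*L*(τ:ℝ)) ≤ 1/6*(1/6) := mul_self_le_mul_self h0 hηlLτ
      have e4' := mul_le_mul_of_nonneg_right e4 (show (0:ℝ) ≤ (τ:ℝ)-1 by linarith)
      have e5 := mul_le_mul_of_nonneg_right hηlLτ hτ0.le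
      linarith [e3, e4', e5, hτR]
    have h8 := mul_le_mul_of_nonneg_left hc2
      (show (0:ℝ) ≤ 144/25*ηg*ηl*h by
        apply mul_nonneg (by positivity) hh0)
    have h9 : (0:ℝ) ≤ ηg*ηl*(τ:ℝ)*h := mul_nonneg (by positivity) hh0
    linarith [h8, h9]
  linarith [hmain, h7, hσpart, hhpart]
end

section
/- (Bounding client aggregate gradients.) Let F_1, …, F_M : ℝ^d → ℝ be convex, differentiable and L-smooth, let F = (1/M)Σ_{i=1}^M F_i, let w* be a minimizer of F, and assume (1/M) Σ_{i=1}^M ‖∇F_i(w*)‖² ≤ σ*². Let w^{(t)} ∈ ℝ^d and let w_i^{(t,k)} ∈ ℝ^d for i ∈ {1,…,M}, k ∈ {0,…,τ−1} be arbitrary points (in particular the local gradient descent iterates started at w^{(t)}). Then (1/M) Σ_{i=1}^M Σ_{k=0}^{τ−1} ‖∇F_i(w_i^{(t,k)})‖² ≤ (3L²/M) Σ_{i=1}^M Σ_{k=0}^{τ−1} ‖w_i^{(t,k)} − w^{(t)}‖² + 6τL(F(w^{(t)}) − F(w*)) + 3τσ*². -/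
section AuxLemmas
open InnerProductSpace Set
variable {E : Type*} [NormedAddCommGroup E] [InnerProductSpace ℝ E] [CompleteSpace E]

local notation "⟪" x ", " y "⟫" => @inner ℝ _ _ x y

lemma grad_inner (f : E → ℝ) (x u : E) : ⟪gradient f x, u⟫ = fderiv ℝ f x u := by
  rw [gradient]; exact toDual_symm_apply

lemma curve_hasDerivAt {f : E → ℝ} (hf : Differentiable ℝ f) (x v : E) (t : ℝ) :
    HasDerivAt (fun s : ℝ => f (x + s • v)) ⟪gradient f (x + t • v), v⟫ t := by
  have hc : HasDerivAt (fun s : ℝ => x + s • v) v t := by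
    simpa using ((hasDerivAt_id t).smul_const v).const_add x
  have := ((hf (x + t • v)).hasFDerivAt).comp_hasDerivAt t hc
  rw [grad_inner]; exact this

/-- Descent lemma. -/
lemma descent {f : E → ℝ} (hf : Differentiable ℝ f) {L : ℝ}
    (hL : ∀ w w' : E, ‖gradient f w - gradient f w'‖ ≤ L * ‖w - w'‖) (x v : E) :
    f (x + v) ≤ f x + ⟪gradient f x, v⟫ + L / 2 * ‖v‖ ^ 2 := by
  set A : ℝ := ⟪gradient f x, v⟫
  set B : ℝ := L / 2 * ‖v‖ ^ 2
  set φ : ℝ → ℝ := fun t => f (x + t • v) - t * A - t ^ 2 * B with hφ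
  have hder : ∀ t : ℝ, HasDerivAt φ (⟪gradient f (x + t • v), v⟫ - A - 2 * t * B) t := by
    intro t
    have h1 := curve_hasDerivAt hf x v t
    have h2 : HasDerivAt (fun s : ℝ => s * A) A t := by
      simpa using (hasDerivAt_id t).mul_const A
    have h3 : HasDerivAt (fun s : ℝ => s ^ 2 * B) (2 * t * B) t := by
      simpa using ((hasDerivAt_pow 2 t).mul_const B)
    exact (h1.sub h2).sub h3
  have hmono : AntitoneOn φ (Icc (0:ℝ) 1) := by
    apply antitoneOn_of_deriv_nonpos (convex_Icc 0 1)
    · exact (fun t _ => (hder t).differentiableAt.continuousAt.continuousWithinAt)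
    · intro t ht
      exact (hder t).differentiableAt.differentiableWithinAt
    · intro t ht
      rw [interior_Icc] at ht
      rw [(hder t).deriv]
      have hx : ⟪gradient f (x + t • v) - gradient f x, v⟫ ≤ L * t * ‖v‖ ^ 2 := by
        calc ⟪gradient f (x + t • v) - gradient f x, v⟫
            ≤ ‖gradient f (x + t • v) - gradient f x‖ * ‖v‖ := real_inner_le_norm _ _
          _ ≤ (L * ‖(x + t • v) - x‖) * ‖v‖ := by
              exact mul_le_mul_of_nonneg_right (hL _ _) (norm_nonneg v)
          _ = L * t * ‖v‖ ^ 2 := by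
              have hnorm : ‖(x + t • v) - x‖ = t * ‖v‖ := by
                rw [add_sub_cancel_left, norm_smul, Real.norm_eq_abs, abs_of_pos ht.1]
              rw [hnorm]; ring
      have hin : ⟪gradient f (x + t • v), v⟫ - A = ⟪gradient f (x + t • v) - gradient f x, v⟫ := by
        simp [A, inner_sub_left]
      have : 2 * t * B = L * t * ‖v‖ ^ 2 := by simp [B]; ring
      linarith
  have h01 := hmono (Set.left_mem_Icc.2 one_pos.le) (Set.right_mem_Icc.2 one_pos.le) one_pos.le
  simp only [hφ] at h01
  simp only [one_smul, zero_smul, add_zero, one_pow, one_mul, zero_mul, zero_pow, sub_zero] at h01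
  linarith

/-- First-order condition for convexity. -/
lemma first_order {f : E → ℝ} (hc : ConvexOn ℝ univ f) (hf : Differentiable ℝ f) (x y : E) :
    f x + ⟪gradient f x, y - x⟫ ≤ f y := by
  set g : ℝ → ℝ := fun t => f (x + t • (y - x)) with hg
  have hgc : ConvexOn ℝ univ g := by
    have := hc.comp_affineMap (AffineMap.lineMap x y)
    have heq : g = f ∘ (AffineMap.lineMap x y) := by
      funext t
      simp [hg, AffineMap.lineMap_apply, add_comm]
    rw [heq]
    simpa using this
  have hd0 : HasDerivAt g ⟪gradient f (x + (0:ℝ) • (y - x)), y - x⟫ 0 :=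
    curve_hasDerivAt hf x (y - x) 0
  have hslope := hgc.le_slope_of_hasDerivAt (mem_univ (0:ℝ)) (mem_univ (1:ℝ)) one_pos hd0
  have hs : slope g 0 1 = g 1 - g 0 := by simp [slope_def_field]
  rw [hs] at hslope
  simp only [hg, zero_smul, add_zero, one_smul] at hslope
  have : x + (y - x) = y := by abel
  rw [this] at hslope
  simp only [zero_smul, add_zero] at hd0 ⊢
  linarith

omit [CompleteSpace E] in
lemma inner_concave (a : E) : ConcaveOn ℝ univ (fun w : E => ⟪a, w⟫) := by
  refine ⟨convex_univ, fun u _ v _ p q _ _ _ => ?_⟩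
  simp [inner_add_right, inner_smul_right]

lemma sub_inner_hasGradientAt {f : E → ℝ} (hf : Differentiable ℝ f) (a w : E) :
    HasGradientAt (fun z => f z - ⟪a, z⟫) (gradient f w - a) w := by
  have h1 : HasFDerivAt f (fderiv ℝ f w) w := (hf w).hasFDerivAt
  have h2 : HasFDerivAt (fun z : E => ⟪a, z⟫) (innerSL ℝ a) w := (innerSL ℝ a).hasFDerivAt
  have h3 := h1.sub h2
  rw [HasGradientAt, HasGradientAtFilter, map_sub]
  have e1 : (toDual ℝ E) (gradient f w) = fderiv ℝ f w := by
    rw [gradient]; exact (toDual ℝ E).apply_symm_apply _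
  have e2 : (toDual ℝ E) a = innerSL ℝ a := rfl
  rw [e1, e2]
  exact h3

/-- Cocoercivity of the gradient for convex L-smooth functions. -/
lemma cocoercive {f : E → ℝ} (hc : ConvexOn ℝ univ f) (hf : Differentiable ℝ f) {L : ℝ}
    (hL0 : 0 ≤ L)
    (hL : ∀ w w' : E, ‖gradient f w - gradient f w'‖ ≤ L * ‖w - w'‖) (x y : E) :
    ‖gradient f x - gradient f y‖ ^ 2 ≤ 2 * L * (f x - f y - ⟪gradient f y, x - y⟫) := by
  set a : E := gradient f y with ha
  set h : E → ℝ := fun z => f z - ⟪a, z⟫ with hh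
  have hdh : Differentiable ℝ h := hf.sub ((innerSL ℝ a).differentiable)
  have hgradh : ∀ w, gradient h w = gradient f w - a :=
    fun w => (sub_inner_hasGradientAt hf a w).gradient
  have hhc : ConvexOn ℝ univ h := hc.sub (inner_concave a)
  have hLh : ∀ w w' : E, ‖gradient h w - gradient h w'‖ ≤ L * ‖w - w'‖ := by
    intro w w'; rw [hgradh, hgradh]
    simpa using hL w w'
  have hymin : ∀ z, h y ≤ h z := by
    intro z
    have h1 := first_order hhc hdh y z
    rw [hgradh] at h1
    simp only [ha, sub_self, inner_zero_left, add_zero] at h1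
    exact h1
  have hbreg : h x - h y = f x - f y - ⟪a, x - y⟫ := by
    simp only [hh, inner_sub_right]; ring
  rcases eq_or_lt_of_le hL0 with hL0' | hL0'
  · -- L = 0 : gradients are all equal
    have hg0 : ‖gradient f x - gradient f y‖ ≤ 0 := by
      have := hL x y; rw [← hL0'] at this; simpa using this
    have : ‖gradient f x - gradient f y‖ = 0 := le_antisymm hg0 (norm_nonneg _)
    rw [this, ← hL0']
    norm_num
  · -- L > 0
    set g : E := gradient h x with hgdef
    have hdesc := descent hdh hLh x (-(L⁻¹ • g))
    have hinner : ⟪gradient h x, -(L⁻¹ • g)⟫ = -(L⁻¹ * ‖g‖ ^ 2) := by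
      rw [← hgdef, inner_neg_right, real_inner_smul_right, real_inner_self_eq_norm_sq]
    have hnv : ‖-(L⁻¹ • g)‖ ^ 2 = L⁻¹ ^ 2 * ‖g‖ ^ 2 := by
      rw [norm_neg, norm_smul, Real.norm_eq_abs, abs_of_pos (inv_pos.2 hL0'), mul_pow]
    rw [hinner, hnv] at hdesc
    have hkey : h y ≤ h x - 1 / (2 * L) * ‖g‖ ^ 2 := by
      have h2 := hymin (x + -(L⁻¹ • g))
      have hcalc : h x + -(L⁻¹ * ‖g‖ ^ 2) + L / 2 * (L⁻¹ ^ 2 * ‖g‖ ^ 2)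
          = h x - 1 / (2 * L) * ‖g‖ ^ 2 := by
        field_simp
        ring
      linarith [hdesc, hcalc.ge]
    have hgf : g = gradient f x - a := by rw [hgdef, hgradh]
    have : ‖g‖ ^ 2 ≤ 2 * L * (h x - h y) := by
      have h3 : 1 / (2 * L) * ‖g‖ ^ 2 ≤ h x - h y := by linarith
      have h4 := mul_le_mul_of_nonneg_left h3 (le_of_lt (by positivity : (0:ℝ) < 2 * L))
      calc ‖g‖ ^ 2 = 2 * L * (1 / (2 * L) * ‖g‖ ^ 2) := by field_simp
        _ ≤ 2 * L * (h x - h y) := h4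
    rw [hgf] at this
    rw [← hbreg]
    exact this

end AuxLemmas

set_option maxHeartbeats 1000000 in
/-- Bounding client aggregate gradients (Lemma 5 in the appendix). -/
theorem bounding_client_aggregate_gradients {d M : ℕ} (hM : 0 < M)
    (F : Fin M → EuclideanSpace ℝ (Fin d) → ℝ)
    (Fbar : EuclideanSpace ℝ (Fin d) → ℝ)
    (hFbar : ∀ w, Fbar w = (1 / (M : ℝ)) * ∑ i, F i w)
    (L σstar : ℝ) (τ : ℕ)
    (hconv : ∀ i, ConvexOn ℝ Set.univ (F i)) (hdiff : ∀ i, Differentiable ℝ (F i))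
    (hsmooth : ∀ i, ∀ w w' : EuclideanSpace ℝ (Fin d),
      ‖gradient (F i) w - gradient (F i) w'‖ ≤ L * ‖w - w'‖)
    (wstar : EuclideanSpace ℝ (Fin d)) (hmin : ∀ w, Fbar wstar ≤ Fbar w)
    (hσ : (1 / (M : ℝ)) * ∑ i, ‖gradient (F i) wstar‖ ^ 2 ≤ σstar ^ 2)
    (wt : EuclideanSpace ℝ (Fin d))
    (wloc : Fin M → ℕ → EuclideanSpace ℝ (Fin d)) :
    (1 / (M : ℝ)) * ∑ i, ∑ k ∈ Finset.range τ, ‖gradient (F i) (wloc i k)‖ ^ 2 ≤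
      (3 * L ^ 2 / (M : ℝ)) * ∑ i, ∑ k ∈ Finset.range τ, ‖wloc i k - wt‖ ^ 2
        + 6 * τ * L * (Fbar wt - Fbar wstar) + 3 * τ * σstar ^ 2 := by
  have hMpos : (0:ℝ) < M := Nat.cast_pos.2 hM
  rcases lt_or_ge L 0 with hLneg | hL0
  · -- degenerate case: the space must be a subsingleton
    have hsub : ∀ w w' : EuclideanSpace ℝ (Fin d), w = w' := by
      intro w w'
      by_contra hne
      have h1 : (0:ℝ) ≤ L * ‖w - w'‖ :=
        le_trans (norm_nonneg _) (hsmooth ⟨0, hM⟩ w w')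
      have h2 : 0 < ‖w - w'‖ := by
        rw [norm_pos_iff]; exact sub_ne_zero.2 hne
      nlinarith
    have hzero : ∀ v : EuclideanSpace ℝ (Fin d), ‖v‖ = 0 := fun v => by rw [hsub v 0, norm_zero]
    have hL : (1 / (M : ℝ)) * ∑ i, ∑ k ∈ Finset.range τ, ‖gradient (F i) (wloc i k)‖ ^ 2 = 0 := by
      rw [Finset.sum_congr rfl fun i _ => Finset.sum_congr rfl fun k _ => by
        rw [hzero (gradient (F i) (wloc i k))]]
      simp
    rw [hL]
    have hB : ∀ i k, ‖wloc i k - wt‖ ^ 2 = 0 := fun i k => by rw [hzero]; ring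
    have hwt : wt = wstar := hsub wt wstar
    have : (3 * L ^ 2 / (M : ℝ)) * ∑ i, ∑ k ∈ Finset.range τ, ‖wloc i k - wt‖ ^ 2 = 0 := by
      rw [Finset.sum_congr rfl fun i _ => Finset.sum_congr rfl fun k _ => hB i k]
      simp
    rw [this, hwt]
    have : Fbar wstar - Fbar wstar = 0 := sub_self _
    rw [this]
    have : (0:ℝ) ≤ 3 * τ * σstar ^ 2 := by positivity
    linarith
  · -- main case
    set g1 : Fin M → ℕ → EuclideanSpace ℝ (Fin d) := fun i k => gradient (F i) (wloc i k)
    set g2 : Fin M → EuclideanSpace ℝ (Fin d) := fun i => gradient (F i) wt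
    set g3 : Fin M → EuclideanSpace ℝ (Fin d) := fun i => gradient (F i) wstar
    -- the gradients of the F i sum to zero at the minimizer
    have hFbar' : Fbar = fun w => (1 / (M : ℝ)) * ∑ i, F i w := funext hFbar
    have hdFbar : Differentiable ℝ Fbar := by
      rw [hFbar']
      exact (Differentiable.fun_sum fun i _ => hdiff i).const_mul _
    have hlocmin : IsLocalMin Fbar wstar := Filter.Eventually.of_forall hmin
    have hfd0 : fderiv ℝ Fbar wstar = 0 := hlocmin.fderiv_eq_zero
    have hFder : HasFDerivAt Fbar ((1 / (M : ℝ)) • ∑ i, fderiv ℝ (F i) wstar) wstar := by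
      rw [hFbar']
      exact (HasFDerivAt.fun_sum fun i _ => ((hdiff i) wstar).hasFDerivAt).const_mul _
    have hsumfd : ∑ i, fderiv ℝ (F i) wstar = 0 := by
      have := hFder.fderiv
      rw [hfd0] at this
      have hM0 : (1 / (M : ℝ)) ≠ 0 := by positivity
      rcases smul_eq_zero.1 this.symm with h | h
      · exact absurd h hM0
      · exact h
    have hsum0 : ∑ i, g3 i = 0 := by
      have : ∑ i, g3 i = (InnerProductSpace.toDual ℝ (EuclideanSpace ℝ (Fin d))).symm (∑ i, fderiv ℝ (F i) wstar) := by
        rw [map_sum]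
        rfl
      rw [this, hsumfd, map_zero]
    have hinner0 : ∑ i, (inner ℝ (g3 i) (wt - wstar) : ℝ) = 0 := by
      rw [← sum_inner, hsum0, inner_zero_left]
    -- pointwise bound
    have key : ∀ i k, ‖g1 i k‖ ^ 2 ≤
        3 * L ^ 2 * ‖wloc i k - wt‖ ^ 2 + 3 * ‖g2 i - g3 i‖ ^ 2 + 3 * ‖g3 i‖ ^ 2 := by
      intro i k
      have htri : ‖g1 i k‖ ≤ ‖g1 i k - g2 i‖ + ‖g2 i - g3 i‖ + ‖g3 i‖ := by
        have : g1 i k = (g1 i k - g2 i) + (g2 i - g3 i) + g3 i := by abel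
        calc ‖g1 i k‖ = ‖(g1 i k - g2 i) + (g2 i - g3 i) + g3 i‖ := by rw [← this]
          _ ≤ _ := norm_add₃_le
      have hsq : ‖g1 i k‖ ^ 2 ≤ (‖g1 i k - g2 i‖ + ‖g2 i - g3 i‖ + ‖g3 i‖) ^ 2 :=
        pow_le_pow_left₀ (norm_nonneg _) htri 2
      have h3 : (‖g1 i k - g2 i‖ + ‖g2 i - g3 i‖ + ‖g3 i‖) ^ 2 ≤
          3 * (‖g1 i k - g2 i‖ ^ 2 + ‖g2 i - g3 i‖ ^ 2 + ‖g3 i‖ ^ 2) := by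
        nlinarith [sq_nonneg (‖g1 i k - g2 i‖ - ‖g2 i - g3 i‖),
          sq_nonneg (‖g1 i k - g2 i‖ - ‖g3 i‖), sq_nonneg (‖g2 i - g3 i‖ - ‖g3 i‖)]
      have hsm : ‖g1 i k - g2 i‖ ^ 2 ≤ L ^ 2 * ‖wloc i k - wt‖ ^ 2 := by
        have := pow_le_pow_left₀ (norm_nonneg _) (hsmooth i (wloc i k) wt) 2
        calc ‖g1 i k - g2 i‖ ^ 2 ≤ (L * ‖wloc i k - wt‖) ^ 2 := this
          _ = L ^ 2 * ‖wloc i k - wt‖ ^ 2 := by ring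
      linarith
    -- cocoercivity
    have hco : ∀ i, ‖g2 i - g3 i‖ ^ 2 ≤
        2 * L * (F i wt - F i wstar - (inner ℝ (g3 i) (wt - wstar) : ℝ)) :=
      fun i => cocoercive (hconv i) (hdiff i) hL0 (hsmooth i) wt wstar
    set A : ℝ := ∑ i, ∑ k ∈ Finset.range τ, ‖g1 i k‖ ^ 2 with hA
    set B : ℝ := ∑ i, ∑ k ∈ Finset.range τ, ‖wloc i k - wt‖ ^ 2 with hB
    set C : ℝ := ∑ i, ‖g2 i - g3 i‖ ^ 2 with hC
    set D : ℝ := ∑ i, ‖g3 i‖ ^ 2 with hD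
    have h1 : A ≤ 3 * L ^ 2 * B + 3 * (τ:ℝ) * C + 3 * (τ:ℝ) * D := by
      have hA1 : A ≤ ∑ i, ∑ k ∈ Finset.range τ,
          (3 * L ^ 2 * ‖wloc i k - wt‖ ^ 2 + 3 * ‖g2 i - g3 i‖ ^ 2 + 3 * ‖g3 i‖ ^ 2) :=
        Finset.sum_le_sum fun i _ => Finset.sum_le_sum fun k _ => key i k
      have hA2 : ∑ i, ∑ k ∈ Finset.range τ,
          (3 * L ^ 2 * ‖wloc i k - wt‖ ^ 2 + 3 * ‖g2 i - g3 i‖ ^ 2 + 3 * ‖g3 i‖ ^ 2)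
          = 3 * L ^ 2 * B + 3 * (τ:ℝ) * C + 3 * (τ:ℝ) * D := by
        rw [hB, hC, hD, Finset.mul_sum, Finset.mul_sum, Finset.mul_sum, ← Finset.sum_add_distrib,
          ← Finset.sum_add_distrib]
        refine Finset.sum_congr rfl fun i _ => ?_
        simp only [Finset.sum_add_distrib, Finset.sum_const, Finset.card_range,
          nsmul_eq_mul, ← Finset.mul_sum]
        ring
      linarith [hA2 ▸ hA1]
    have h2 : C ≤ 2 * L * ((M:ℝ) * (Fbar wt - Fbar wstar)) := by
      have hC1 : C ≤ ∑ i, 2 * L * (F i wt - F i wstar - (inner ℝ (g3 i) (wt - wstar) : ℝ)) :=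
        Finset.sum_le_sum fun i _ => hco i
      have hswt : ∑ i, F i wt = (M:ℝ) * Fbar wt := by
        rw [hFbar wt]; field_simp
      have hsws : ∑ i, F i wstar = (M:ℝ) * Fbar wstar := by
        rw [hFbar wstar]; field_simp
      have hC2 : ∑ i, 2 * L * (F i wt - F i wstar - (inner ℝ (g3 i) (wt - wstar) : ℝ))
          = 2 * L * ((M:ℝ) * (Fbar wt - Fbar wstar)) := by
        rw [← Finset.mul_sum, Finset.sum_sub_distrib, Finset.sum_sub_distrib, hinner0,
          hswt, hsws]
        ring
      linarith [hC2 ▸ hC1]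
    have h3 : (1 / (M:ℝ)) * D ≤ σstar ^ 2 := hσ
    -- combine
    have h1' : (1 / (M:ℝ)) * A ≤ (1 / (M:ℝ)) * (3 * L ^ 2 * B + 3 * (τ:ℝ) * C + 3 * (τ:ℝ) * D) :=
      mul_le_mul_of_nonneg_left h1 (by positivity)
    have e1 : (1 / (M:ℝ)) * (3 * L ^ 2 * B + 3 * (τ:ℝ) * C + 3 * (τ:ℝ) * D)
        = 3 * L ^ 2 / (M:ℝ) * B + 3 * (τ:ℝ) * ((1 / (M:ℝ)) * C) + 3 * (τ:ℝ) * ((1 / (M:ℝ)) * D) := by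
      ring
    have h2' : (1 / (M:ℝ)) * C ≤ 2 * L * (Fbar wt - Fbar wstar) := by
      have := mul_le_mul_of_nonneg_left h2 (show (0:ℝ) ≤ 1 / (M:ℝ) by positivity)
      calc (1 / (M:ℝ)) * C ≤ (1 / (M:ℝ)) * (2 * L * ((M:ℝ) * (Fbar wt - Fbar wstar))) := this
        _ = 2 * L * (Fbar wt - Fbar wstar) := by field_simp
    have h2'' : 3 * (τ:ℝ) * ((1 / (M:ℝ)) * C) ≤ 3 * (τ:ℝ) * (2 * L * (Fbar wt - Fbar wstar)) :=
      mul_le_mul_of_nonneg_left h2' (by positivity)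
    have h3'' : 3 * (τ:ℝ) * ((1 / (M:ℝ)) * D) ≤ 3 * (τ:ℝ) * σstar ^ 2 :=
      mul_le_mul_of_nonneg_left h3 (by positivity)
    have efin : 3 * (τ:ℝ) * (2 * L * (Fbar wt - Fbar wstar)) = 6 * (τ:ℝ) * L * (Fbar wt - Fbar wstar) := by
      ring
    calc (1 / (M:ℝ)) * A ≤ 3 * L ^ 2 / (M:ℝ) * B + 3 * (τ:ℝ) * ((1 / (M:ℝ)) * C)
          + 3 * (τ:ℝ) * ((1 / (M:ℝ)) * D) := by rw [← e1]; exact h1'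
      _ ≤ 3 * L ^ 2 / (M:ℝ) * B + 6 * (τ:ℝ) * L * (Fbar wt - Fbar wstar) + 3 * (τ:ℝ) * σstar ^ 2 := by
          rw [← efin]; linarith
end

section
/- (Bounding client drift in the non-convex case.) Let F_1, …, F_M : ℝ^d → ℝ be differentiable and L-smooth, let F = (1/M)Σ_{i=1}^M F_i, and assume (1/M) Σ_{i=1}^M ‖∇F_i(w) − ∇F(w)‖² ≤ σ_g² for all w ∈ ℝ^d. Fix τ ≥ 1 and 0 < η_l ≤ 1/(6τL). Given w^{(t)} ∈ ℝ^d, define local full-batch gradient descent iterates w_i^{(t,0)} = w^{(t)}, w_i^{(t,k+1)} = w_i^{(t,k)} − η_l ∇F_i(w_i^{(t,k)}) for k = 0,…,τ−1, and the normalized gradients h_i^{(t)} = (1/τ) Σ_{k=0}^{τ−1} ∇F_i(w_i^{(t,k)}). Then (1/M) Σ_{i=1}^M ‖∇F_i(w^{(t)}) − h_i^{(t)}‖² ≤ (1/8)‖∇F(w^{(t)})‖² + 5 η_l² L² τ(τ−1) σ_g². -/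
set_option maxHeartbeats 1000000 in
/-- Bounding client drift in the non-convex case (Lemma 7 in the appendix). -/
theorem bounding_client_drift_nonconvex {d M : ℕ} (hM : 0 < M)
    (F : Fin M → EuclideanSpace ℝ (Fin d) → ℝ)
    (Fbar : EuclideanSpace ℝ (Fin d) → ℝ)
    (hFbar : ∀ w, Fbar w = (1 / (M : ℝ)) * ∑ i, F i w)
    (L ηl σg : ℝ) (τ : ℕ) (hτ : 1 ≤ τ)
    (hdiff : ∀ i, Differentiable ℝ (F i))
    (hsmooth : ∀ i, ∀ w w' : EuclideanSpace ℝ (Fin d),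
      ‖gradient (F i) w - gradient (F i) w'‖ ≤ L * ‖w - w'‖)
    (hσg : ∀ w : EuclideanSpace ℝ (Fin d),
      (1 / (M : ℝ)) * ∑ i, ‖gradient (F i) w - gradient Fbar w‖ ^ 2 ≤ σg ^ 2)
    (hηl : 0 < ηl) (hηlL : ηl ≤ 1 / (6 * τ * L))
    (wt : EuclideanSpace ℝ (Fin d))
    (wloc : Fin M → ℕ → EuclideanSpace ℝ (Fin d))
    (hwloc0 : ∀ i, wloc i 0 = wt)
    (hwlocrec : ∀ i, ∀ k < τ,
      wloc i (k + 1) = wloc i k - ηl • gradient (F i) (wloc i k))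
    (h : Fin M → EuclideanSpace ℝ (Fin d))
    (hh : ∀ i, h i = (1 / (τ : ℝ)) • ∑ k ∈ Finset.range τ, gradient (F i) (wloc i k)) :
    (1 / (M : ℝ)) * ∑ i, ‖gradient (F i) wt - h i‖ ^ 2 ≤
      (1 / 8) * ‖gradient Fbar wt‖ ^ 2 + 5 * ηl ^ 2 * L ^ 2 * τ * (τ - 1) * σg ^ 2 := by
  have hτR : (1:ℝ) ≤ (τ:ℝ) := by exact_mod_cast hτ
  have hτ0 : (0:ℝ) < (τ:ℝ) := by linarith
  have hMR : (0:ℝ) < (M:ℝ) := by exact_mod_cast hM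
  -- L must be positive
  have hL : 0 < L := by
    by_contra hneg
    push_neg at hneg
    have h6 : 6 * (τ:ℝ) * L ≤ 0 := by nlinarith
    have : 1 / (6 * (τ:ℝ) * L) ≤ 0 := div_nonpos_of_nonneg_of_nonpos (by norm_num) h6
    linarith
  have hηLτ : ηl * L * (τ:ℝ) ≤ 1/6 := by
    have h6 : 0 < 6 * (τ:ℝ) * L := by positivity
    rw [le_div_iff₀ h6] at hηlL
    nlinarith
  -- iterate drift bound
  have key : ∀ i : Fin M, ∀ k, k ≤ τ →
      ‖wloc i k - wt‖ ≤ 2 * ηl * (k:ℝ) * ‖gradient (F i) wt‖ := by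
    intro i k
    induction k with
    | zero => intro _; simp [hwloc0]
    | succ m ih =>
      intro hk
      have hm : m < τ := hk
      have ihm := ih (le_of_lt hm)
      have hmτ : (m:ℝ) ≤ (τ:ℝ) := by exact_mod_cast le_of_lt hm
      have h1 : ‖wloc i (m+1) - wt‖ ≤ ‖wloc i m - wt‖ + ηl * ‖gradient (F i) (wloc i m)‖ := by
        rw [hwlocrec i m hm]
        have heq : wloc i m - ηl • gradient (F i) (wloc i m) - wt
            = (wloc i m - wt) + (-(ηl • gradient (F i) (wloc i m))) := by abel
        rw [heq]
        refine (norm_add_le _ _).trans ?_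
        rw [norm_neg, norm_smul, Real.norm_eq_abs, abs_of_pos hηl]
      have h2 : ‖gradient (F i) (wloc i m)‖
          ≤ L * ‖wloc i m - wt‖ + ‖gradient (F i) wt‖ := by
        calc ‖gradient (F i) (wloc i m)‖
            = ‖(gradient (F i) (wloc i m) - gradient (F i) wt) + gradient (F i) wt‖ := by
              rw [sub_add_cancel]
          _ ≤ ‖gradient (F i) (wloc i m) - gradient (F i) wt‖ + ‖gradient (F i) wt‖ :=
              norm_add_le _ _
          _ ≤ L * ‖wloc i m - wt‖ + ‖gradient (F i) wt‖ := by
              have := hsmooth i (wloc i m) wt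
              linarith
      have hgnn : (0:ℝ) ≤ ‖gradient (F i) wt‖ := norm_nonneg _
      have hann : (0:ℝ) ≤ ‖wloc i m - wt‖ := norm_nonneg _
      push_cast
      nlinarith [mul_le_mul_of_nonneg_left h2 hηl.le,
        mul_le_mul_of_nonneg_left ihm (mul_nonneg hηl.le hL.le),
        mul_nonneg hηl.le hgnn, mul_nonneg (mul_nonneg hηl.le hL.le) hgnn,
        mul_le_mul_of_nonneg_right hηLτ hgnn,
        mul_nonneg (mul_nonneg hηl.le hL.le) (mul_nonneg (Nat.cast_nonneg m) hgnn)]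
  -- Gauss sum
  have hgauss : ∑ k ∈ Finset.range τ, (k:ℝ) = (τ:ℝ) * ((τ:ℝ) - 1) / 2 := by
    have h2 := congrArg (Nat.cast (R := ℝ)) (Finset.sum_range_id_mul_two τ)
    push_cast [Nat.cast_sub hτ] at h2
    linarith
  -- drift bound per client
  have drift : ∀ i : Fin M, ‖gradient (F i) wt - h i‖
      ≤ ηl * L * ((τ:ℝ) - 1) * ‖gradient (F i) wt‖ := by
    intro i
    have hsum : gradient (F i) wt - h i
        = (1/(τ:ℝ)) • ∑ k ∈ Finset.range τ,
            (gradient (F i) wt - gradient (F i) (wloc i k)) := by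
      rw [hh i, Finset.sum_sub_distrib, Finset.sum_const, Finset.card_range, smul_sub]
      congr 1
      rw [← Nat.cast_smul_eq_nsmul ℝ, smul_smul, one_div,
        inv_mul_cancel₀ (ne_of_gt hτ0), one_smul]
    rw [hsum, norm_smul, Real.norm_eq_abs, abs_of_pos (by positivity : (0:ℝ) < 1/(τ:ℝ))]
    have hb : ‖∑ k ∈ Finset.range τ, (gradient (F i) wt - gradient (F i) (wloc i k))‖
        ≤ ∑ k ∈ Finset.range τ, (2 * L * ηl * ‖gradient (F i) wt‖ * (k:ℝ)) := by
      refine (norm_sum_le _ _).trans (Finset.sum_le_sum ?_)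
      intro k hk
      have hkτ : k ≤ τ := le_of_lt (Finset.mem_range.mp hk)
      calc ‖gradient (F i) wt - gradient (F i) (wloc i k)‖
          ≤ L * ‖wt - wloc i k‖ := hsmooth i wt (wloc i k)
        _ = L * ‖wloc i k - wt‖ := by rw [norm_sub_rev]
        _ ≤ L * (2 * ηl * (k:ℝ) * ‖gradient (F i) wt‖) :=
            mul_le_mul_of_nonneg_left (key i k hkτ) hL.le
        _ = 2 * L * ηl * ‖gradient (F i) wt‖ * (k:ℝ) := by ring
    have hsum2 : ∑ k ∈ Finset.range τ, (2 * L * ηl * ‖gradient (F i) wt‖ * (k:ℝ))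
        = 2 * L * ηl * ‖gradient (F i) wt‖ * ((τ:ℝ) * ((τ:ℝ) - 1) / 2) := by
      rw [← Finset.mul_sum, hgauss]
    rw [hsum2] at hb
    calc (1/(τ:ℝ)) * ‖∑ k ∈ Finset.range τ, (gradient (F i) wt - gradient (F i) (wloc i k))‖
        ≤ (1/(τ:ℝ)) * (2 * L * ηl * ‖gradient (F i) wt‖ * ((τ:ℝ) * ((τ:ℝ) - 1) / 2)) :=
          mul_le_mul_of_nonneg_left hb (by positivity)
      _ = ηl * L * ((τ:ℝ) - 1) * ‖gradient (F i) wt‖ := by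
          field_simp
  -- squared drift bound
  have drift2 : ∀ i : Fin M, ‖gradient (F i) wt - h i‖ ^ 2
      ≤ (ηl * L * ((τ:ℝ) - 1)) ^ 2 * ‖gradient (F i) wt‖ ^ 2 := by
    intro i
    have hp := pow_le_pow_left₀ (norm_nonneg _) (drift i) 2
    calc ‖gradient (F i) wt - h i‖ ^ 2
        ≤ (ηl * L * ((τ:ℝ) - 1) * ‖gradient (F i) wt‖) ^ 2 := hp
      _ = (ηl * L * ((τ:ℝ) - 1)) ^ 2 * ‖gradient (F i) wt‖ ^ 2 := by ring
  -- variance decomposition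
  have hstep2 : (1/(M:ℝ)) * ∑ i, ‖gradient (F i) wt‖ ^ 2 ≤ 2 * σg ^ 2 + 2 * ‖gradient Fbar wt‖ ^ 2 := by
    have hper : ∀ i : Fin M, ‖gradient (F i) wt‖ ^ 2
        ≤ 2 * ‖gradient (F i) wt - gradient Fbar wt‖ ^ 2 + 2 * ‖gradient Fbar wt‖ ^ 2 := by
      intro i
      have htr : ‖gradient (F i) wt‖
          ≤ ‖gradient (F i) wt - gradient Fbar wt‖ + ‖gradient Fbar wt‖ := by
        calc ‖gradient (F i) wt‖
            = ‖(gradient (F i) wt - gradient Fbar wt) + gradient Fbar wt‖ := by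
              rw [sub_add_cancel]
          _ ≤ _ := norm_add_le _ _
      nlinarith [norm_nonneg (gradient (F i) wt - gradient Fbar wt),
        norm_nonneg (gradient (F i) wt),
        sq_nonneg (‖gradient (F i) wt - gradient Fbar wt‖ - ‖gradient Fbar wt‖)]
    calc (1/(M:ℝ)) * ∑ i, ‖gradient (F i) wt‖ ^ 2
        ≤ (1/(M:ℝ)) * ∑ i, (2 * ‖gradient (F i) wt - gradient Fbar wt‖ ^ 2 + 2 * ‖gradient Fbar wt‖ ^ 2) :=
          mul_le_mul_of_nonneg_left (Finset.sum_le_sum fun i _ => hper i) (by positivity)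
      _ = 2 * ((1/(M:ℝ)) * ∑ i, ‖gradient (F i) wt - gradient Fbar wt‖ ^ 2) + 2 * ‖gradient Fbar wt‖ ^ 2 := by
          have hMne : (M:ℝ) ≠ 0 := ne_of_gt hMR
          rw [Finset.sum_add_distrib, Finset.sum_const, Finset.card_univ, Fintype.card_fin,
            nsmul_eq_mul, mul_add]
          congr 1
          · rw [← Finset.mul_sum]; ring
          · rw [← mul_assoc, one_div, inv_mul_cancel₀ hMne, one_mul]
      _ ≤ 2 * σg ^ 2 + 2 * ‖gradient Fbar wt‖ ^ 2 := by
          have := hσg wt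
          nlinarith
  -- combine
  have hstep1 : (1/(M:ℝ)) * ∑ i, ‖gradient (F i) wt - h i‖ ^ 2
      ≤ (ηl * L * ((τ:ℝ) - 1)) ^ 2 * ((1/(M:ℝ)) * ∑ i, ‖gradient (F i) wt‖ ^ 2) := by
    calc (1/(M:ℝ)) * ∑ i, ‖gradient (F i) wt - h i‖ ^ 2
        ≤ (1/(M:ℝ)) * ∑ i, ((ηl * L * ((τ:ℝ) - 1)) ^ 2 * ‖gradient (F i) wt‖ ^ 2) :=
          mul_le_mul_of_nonneg_left (Finset.sum_le_sum fun i _ => drift2 i) (by positivity)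
      _ = (ηl * L * ((τ:ℝ) - 1)) ^ 2 * ((1/(M:ℝ)) * ∑ i, ‖gradient (F i) wt‖ ^ 2) := by
          rw [← Finset.mul_sum]
          ring
  have hC0 : 0 ≤ (ηl * L * ((τ:ℝ) - 1)) ^ 2 := sq_nonneg _
  have hτ1 : (0:ℝ) ≤ (τ:ℝ) - 1 := by linarith
  have hCX : (ηl * L * ((τ:ℝ) - 1)) ^ 2 ≤ ηl ^ 2 * L ^ 2 * (τ:ℝ) * ((τ:ℝ) - 1) := by
    have heq : ηl ^ 2 * L ^ 2 * (τ:ℝ) * ((τ:ℝ) - 1) - (ηl * L * ((τ:ℝ) - 1)) ^ 2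
        = ηl ^ 2 * L ^ 2 * ((τ:ℝ) - 1) := by ring
    have hpos : 0 ≤ ηl ^ 2 * L ^ 2 * ((τ:ℝ) - 1) := by positivity
    linarith
  have hC8 : 2 * (ηl * L * ((τ:ℝ) - 1)) ^ 2 ≤ 1/8 := by
    have h1 : ηl * L * ((τ:ℝ) - 1) ≤ 1/6 := by
      have heq : ηl * L * (τ:ℝ) - ηl * L * ((τ:ℝ) - 1) = ηl * L := by ring
      have := mul_nonneg hηl.le hL.le
      linarith
    have h0 : 0 ≤ ηl * L * ((τ:ℝ) - 1) := mul_nonneg (mul_nonneg hηl.le hL.le) hτ1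
    have hx : ηl * L * ((τ:ℝ) - 1) * (ηl * L * ((τ:ℝ) - 1)) ≤ (1/6) * (1/6) :=
      mul_le_mul h1 h1 h0 (by norm_num)
    rw [pow_two]
    linarith
  have hfin : (ηl * L * ((τ:ℝ) - 1)) ^ 2 * ((1/(M:ℝ)) * ∑ i, ‖gradient (F i) wt‖ ^ 2) ≤ (ηl * L * ((τ:ℝ) - 1)) ^ 2 * (2 * σg ^ 2 + 2 * ‖gradient Fbar wt‖ ^ 2) :=
    mul_le_mul_of_nonneg_left hstep2 hC0
  have hσ0 : 0 ≤ σg ^ 2 := sq_nonneg _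
  have hG0 : 0 ≤ ‖gradient Fbar wt‖ ^ 2 := sq_nonneg _
  have hX0 : 0 ≤ ηl ^ 2 * L ^ 2 * (τ:ℝ) * ((τ:ℝ) - 1) := by positivity
  have ha : 2 * (ηl * L * ((τ:ℝ) - 1)) ^ 2 * σg ^ 2 ≤ 5 * (ηl ^ 2 * L ^ 2 * (τ:ℝ) * ((τ:ℝ) - 1)) * σg ^ 2 := by
    have h1 := mul_le_mul_of_nonneg_right hCX hσ0
    have h2 := mul_nonneg hX0 hσ0
    linarith
  have hb : 2 * (ηl * L * ((τ:ℝ) - 1)) ^ 2 * ‖gradient Fbar wt‖ ^ 2 ≤ (1/8) * ‖gradient Fbar wt‖ ^ 2 := by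
    have := mul_le_mul_of_nonneg_right hC8 hG0
    linarith
  have hexp : (ηl * L * ((τ:ℝ) - 1)) ^ 2 * (2 * σg ^ 2 + 2 * ‖gradient Fbar wt‖ ^ 2) = 2 * (ηl * L * ((τ:ℝ) - 1)) ^ 2 * σg ^ 2 + 2 * (ηl * L * ((τ:ℝ) - 1)) ^ 2 * ‖gradient Fbar wt‖ ^ 2 := by ring
  calc (1/(M:ℝ)) * ∑ i, ‖gradient (F i) wt - h i‖ ^ 2
      ≤ (ηl * L * ((τ:ℝ) - 1)) ^ 2 * (2 * σg ^ 2 + 2 * ‖gradient Fbar wt‖ ^ 2) := le_trans hstep1 hfin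
    _ = 2 * (ηl * L * ((τ:ℝ) - 1)) ^ 2 * σg ^ 2 + 2 * (ηl * L * ((τ:ℝ) - 1)) ^ 2 * ‖gradient Fbar wt‖ ^ 2 := hexp
    _ ≤ (1/8) * ‖gradient Fbar wt‖ ^ 2 + 5 * (ηl ^ 2 * L ^ 2 * (τ:ℝ) * ((τ:ℝ) - 1)) * σg ^ 2 := by linarith
    _ = (1/8) * ‖gradient Fbar wt‖ ^ 2 + 5 * ηl ^ 2 * L ^ 2 * (τ:ℝ) * ((τ:ℝ) - 1) * σg ^ 2 := by
        ring
end

section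
/- (Gradient descent on overparameterized linear regression converges to the projection.) Let n ≤ d and let A be a real n×d matrix admitting a decomposition A = U Σ₁ V₁ᵀ where U is an n×n orthogonal matrix, Σ₁ is an n×n invertible diagonal matrix, V₁ is a d×n matrix with V₁ᵀV₁ = I_n, V₂ is a d×(d−n) matrix with V₂ᵀV₂ = I_{d−n}, V₁ᵀV₂ = 0, and V₁V₁ᵀ + V₂V₂ᵀ = I_d. Let b ∈ ℝ^n, let λ_max denote the largest eigenvalue of AᵀA, and fix a step size 0 < η_l ≤ 1/λ_max. Define iterates w^{(0)} = w and w^{(t+1)} = w^{(t)} − η_l (AᵀA w^{(t)} − Aᵀ b). Then w^{(T)} converges as T → ∞ to V₂V₂ᵀ w + V₁ Σ₁⁻¹ Uᵀ b, the Euclidean projection of w onto the set S* = { V₂V₂ᵀ x + V₁ Σ₁⁻¹ Uᵀ b : x ∈ ℝ^d } of minimizers of w′ ↦ ‖Aw′ − b‖². -/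
open Matrix

/-- Gradient descent on overparameterized linear regression with step size
`0 < η_l ≤ 1/λ_max(AᵀA)` converges to the Euclidean projection
`V₂V₂ᵀ w + V₁ Σ₁⁻¹ Uᵀ b` of the starting point `w` onto the set of minimizers. -/
theorem linear_regression_gd_converges_to_projection {n d : ℕ} (hn : n ≤ d)
    (A : Matrix (Fin n) (Fin d) ℝ) (U S1 : Matrix (Fin n) (Fin n) ℝ)
    (V1 : Matrix (Fin d) (Fin n) ℝ) (V2 : Matrix (Fin d) (Fin (d - n)) ℝ)
    (hU1 : U * Uᵀ = 1) (hU2 : Uᵀ * U = 1)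
    (hS1diag : ∃ σ : Fin n → ℝ, S1 = Matrix.diagonal σ) (hS1inv : IsUnit S1.det)
    (hV1 : V1ᵀ * V1 = 1) (hV2 : V2ᵀ * V2 = 1) (hV12 : V1ᵀ * V2 = 0)
    (hVV : V1 * V1ᵀ + V2 * V2ᵀ = 1)
    (hA : A = U * S1 * V1ᵀ)
    (b : Fin n → ℝ)
    (hH : (Aᵀ * A).IsHermitian) (lamMax : ℝ) (hlam : lamMax = ⨆ i, hH.eigenvalues i)
    (ηl : ℝ) (hηl : 0 < ηl) (hηlam : ηl ≤ 1 / lamMax)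
    (w : Fin d → ℝ) (wseq : ℕ → (Fin d → ℝ)) (hw0 : wseq 0 = w)
    (hwrec : ∀ t : ℕ,
      wseq (t + 1) = wseq t - ηl • ((Aᵀ * A).mulVec (wseq t) - Aᵀ.mulVec b)) :
    Filter.Tendsto wseq Filter.atTop
      (nhds ((V2 * V2ᵀ).mulVec w + (V1 * S1⁻¹ * Uᵀ).mulVec b)) := by
  obtain ⟨σ, hσ⟩ := hS1diag
  -- basic facts about S1
  have hσne : ∀ i, σ i ≠ 0 := by
    intro i h0
    rw [hσ, Matrix.det_diagonal] at hS1inv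
    rw [Finset.prod_eq_zero (Finset.mem_univ i) h0] at hS1inv
    exact hS1inv.ne_zero rfl
  have hS1S1inv : S1 * S1⁻¹ = 1 := Matrix.mul_nonsing_inv S1 hS1inv
  have hS1T : S1ᵀ = S1 := by rw [hσ, Matrix.diagonal_transpose]
  -- transpose of A
  have hAT : Aᵀ = V1 * S1 * Uᵀ := by
    rw [hA, Matrix.transpose_mul, Matrix.transpose_mul, Matrix.transpose_transpose, hS1T,
      Matrix.mul_assoc]
  -- the Gram matrix
  have hM : Aᵀ * A = V1 * (S1 * S1) * V1ᵀ := by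
    rw [hAT, hA]
    simp only [Matrix.mul_assoc]
    rw [← Matrix.mul_assoc Uᵀ U, hU2, Matrix.one_mul]
  have hMV1 : (Aᵀ * A) * V1 = V1 * (S1 * S1) := by
    rw [hM, Matrix.mul_assoc (V1 * (S1 * S1)) V1ᵀ V1, hV1, Matrix.mul_one]
  -- the limit point is a critical point
  set wstar : Fin d → ℝ := (V2 * V2ᵀ).mulVec w + (V1 * S1⁻¹ * Uᵀ).mulVec b with hwstar
  have h1 : (Aᵀ * A) * (V2 * V2ᵀ) = 0 := by
    rw [hM, Matrix.mul_assoc (V1 * (S1 * S1)) V1ᵀ (V2 * V2ᵀ),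
      ← Matrix.mul_assoc V1ᵀ V2 V2ᵀ, hV12, Matrix.zero_mul, Matrix.mul_zero]
  have h2 : (Aᵀ * A) * (V1 * S1⁻¹ * Uᵀ) = Aᵀ := by
    rw [hM, hAT]
    simp only [Matrix.mul_assoc]
    rw [← Matrix.mul_assoc V1ᵀ V1, hV1, Matrix.one_mul,
      ← Matrix.mul_assoc S1 S1⁻¹, hS1S1inv, Matrix.one_mul]
  have hcrit : (Aᵀ * A).mulVec wstar = Aᵀ.mulVec b := by
    rw [hwstar, Matrix.mulVec_add, Matrix.mulVec_mulVec, h1, Matrix.mulVec_mulVec, h2,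
      Matrix.zero_mulVec, zero_add]
  -- eigenvalue bound : σ i ^ 2 ≤ lamMax
  have hev : ∀ i : Fin n, σ i ^ 2 ∈ spectrum ℝ (Aᵀ * A) := by
    intro i
    rw [← AlgEquiv.spectrum_eq (Matrix.toLinAlgEquiv' (R := ℝ) (n := Fin d)) (Aᵀ * A),
      ← Module.End.hasEigenvalue_iff_mem_spectrum]
    apply Module.End.hasEigenvalue_of_hasEigenvector (x := V1.mulVec (Pi.single i 1))
    constructor
    · have hd : (Matrix.diagonal fun k => σ k * σ k).mulVec (Pi.single i 1)
          = σ i ^ 2 • (Pi.single i 1 : Fin n → ℝ) := by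
        funext j
        rw [Matrix.mulVec_diagonal]
        rcases eq_or_ne j i with rfl | hji
        · simp [pow_two]
        · simp [Pi.single_eq_of_ne hji]
      rw [Module.End.mem_eigenspace_iff, Matrix.toLinAlgEquiv'_apply, Matrix.mulVec_mulVec,
        hMV1, ← Matrix.mulVec_mulVec, hσ, Matrix.diagonal_mul_diagonal, hd,
        Matrix.mulVec_smul]
    · intro h0
      have h1 : V1ᵀ.mulVec (V1.mulVec (Pi.single i 1)) = 0 := by
        rw [h0, Matrix.mulVec_zero]
      rw [Matrix.mulVec_mulVec, hV1, Matrix.one_mulVec] at h1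
      have := congrFun h1 i
      simp at this
  have hlamPos : 0 < lamMax := by
    by_contra h
    push_neg at h
    have : (1 : ℝ) / lamMax ≤ 0 := one_div_nonpos.mpr h
    linarith
  have hηlam1 : ηl * lamMax ≤ 1 := (le_div_iff₀ hlamPos).mp hηlam
  have hle : ∀ i : Fin n, σ i ^ 2 ≤ lamMax := by
    intro i
    obtain ⟨j, hj⟩ := (hH.spectrum_real_eq_range_eigenvalues ▸ hev i : σ i ^ 2 ∈ Set.range hH.eigenvalues)
    rw [hlam, ← hj]
    exact le_ciSup (Set.Finite.bddAbove (Set.finite_range _)) j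
  have habs : ∀ i : Fin n, |1 - ηl * σ i ^ 2| < 1 := by
    intro i
    have h1 : 0 < σ i ^ 2 := pow_two_pos_of_ne_zero (hσne i)
    have h2 : ηl * σ i ^ 2 ≤ ηl * lamMax := mul_le_mul_of_nonneg_left (hle i) hηl.le
    rw [abs_lt]
    constructor <;> nlinarith
  -- closed form for the iterates
  set c : Fin n → ℝ := V1ᵀ.mulVec w - (S1⁻¹ * Uᵀ).mulVec b with hc
  have key : ∀ t, wseq t = wstar + V1.mulVec (fun i => (1 - ηl * σ i ^ 2) ^ t * c i) := by
    intro t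
    induction t with
    | zero =>
      have : (fun i => (1 - ηl * σ i ^ 2) ^ 0 * c i) = c := by funext i; simp
      rw [hw0, this, hc, hwstar, Matrix.mulVec_sub, Matrix.mulVec_mulVec, Matrix.mulVec_mulVec,
        ← Matrix.mul_assoc]
      have h3 : (V2 * V2ᵀ).mulVec w + (V1 * S1⁻¹ * Uᵀ).mulVec b +
          ((V1 * V1ᵀ).mulVec w - (V1 * S1⁻¹ * Uᵀ).mulVec b)
          = ((V1 * V1ᵀ).mulVec w + (V2 * V2ᵀ).mulVec w) := by abel
      rw [h3, ← Matrix.add_mulVec, hVV, Matrix.one_mulVec]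
    | succ t ih =>
      rw [hwrec t, ih]
      have hgrad : (Aᵀ * A).mulVec (wstar + V1.mulVec (fun i => (1 - ηl * σ i ^ 2) ^ t * c i))
          - Aᵀ.mulVec b
          = V1.mulVec ((S1 * S1).mulVec (fun i => (1 - ηl * σ i ^ 2) ^ t * c i)) := by
        rw [Matrix.mulVec_add, hcrit, Matrix.mulVec_mulVec, hMV1, ← Matrix.mulVec_mulVec]
        abel
      rw [hgrad, ← Matrix.mulVec_smul, add_sub_assoc, ← Matrix.mulVec_sub]
      have hveq : ((fun i => (1 - ηl * σ i ^ 2) ^ t * c i)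
          - ηl • (S1 * S1).mulVec (fun i => (1 - ηl * σ i ^ 2) ^ t * c i))
          = (fun i => (1 - ηl * σ i ^ 2) ^ (t + 1) * c i) := by
        funext i
        have hdd : ((S1 * S1).mulVec fun k => (1 - ηl * σ k ^ 2) ^ t * c k) i
            = σ i ^ 2 * ((1 - ηl * σ i ^ 2) ^ t * c i) := by
          rw [hσ, Matrix.diagonal_mul_diagonal, Matrix.mulVec_diagonal]; ring
        simp only [Pi.sub_apply, Pi.smul_apply, smul_eq_mul, hdd]
        ring
      rw [hveq]
  -- take the limit
  have hg : Filter.Tendsto (fun t => (fun i => (1 - ηl * σ i ^ 2) ^ t * c i)) Filter.atTop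
      (nhds 0) := by
    rw [tendsto_pi_nhds]
    intro i
    have h := (tendsto_pow_atTop_nhds_zero_of_abs_lt_one (habs i)).mul_const (c i)
    rw [zero_mul] at h
    simpa using h
  have hcont : Continuous V1.mulVecLin := V1.mulVecLin.continuous_of_finiteDimensional
  have hV1lim : Filter.Tendsto (fun t => V1.mulVec (fun i => (1 - ηl * σ i ^ 2) ^ t * c i))
      Filter.atTop (nhds 0) := by
    have := (hcont.tendsto 0).comp hg
    simpa [Function.comp_def, Matrix.mulVecLin_apply, Matrix.mulVec_zero] using this
  have := (tendsto_const_nhds (x := wstar) (f := Filter.atTop (α := ℕ))).add hV1lim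
  rw [add_zero] at this
  exact Filter.Tendsto.congr (fun t => (key t).symm) this
end

section
/- (Extrapolation with server momentum.) Let w* ∈ ℝ^d, β ≥ 0, and for each round t ≥ 0 let Δ_1^{(t)}, …, Δ_M^{(t)} ∈ ℝ^d be given with Δ̄^{(t)} = (1/M) Σ_{i=1}^M Δ_i^{(t)} and m^{(t)} = (1/M) Σ_{i=1}^M ‖Δ_i^{(t)}‖². Define momentum v^{(−1)} = 0, v^{(t)} = Δ̄^{(t)} + β v^{(t−1)}, and iterates w^{(t+1)} = w^{(t)} − η_g^{(t)} v^{(t)} with η_g^{(t)} ≥ 0. Fix t ≥ 0 and assume: (a) ⟨w^{(s)} − w*, Δ̄^{(s)}⟩ ≥ m^{(s)} for all 0 ≤ s ≤ t; and (b) for every 0 ≤ r ≤ t−1, 2 η_g^{(r)} ‖v^{(r)}‖² ≤ m^{(r)} + Σ_{k=0}^{r−1} (β/2)^{r−k} m^{(k)}. Then ⟨w^{(t)} − w*, v^{(t)}⟩ ≥ m^{(t)} + Σ_{k=0}^{t−1} (β/2)^{t−k} m^{(k)}. -/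
open scoped RealInnerProductSpace

/-- Extrapolation with server momentum: under the per-round inner product condition and a bound
on the past server step sizes, the momentum direction `v^{(t)}` satisfies
`⟪w^{(t)} − w*, v^{(t)}⟫ ≥ m^{(t)} + Σ_{k<t} (β/2)^{t−k} m^{(k)}`. -/
theorem momentum_extrapolation_inner_bound {d M : ℕ} (hM : 0 < M)
    (wstar : EuclideanSpace ℝ (Fin d)) (β : ℝ) (hβ : 0 ≤ β)
    (Δ : ℕ → Fin M → EuclideanSpace ℝ (Fin d))
    (Δbar : ℕ → EuclideanSpace ℝ (Fin d))
    (hΔbar : ∀ t, Δbar t = (1 / (M : ℝ)) • ∑ i, Δ t i)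
    (m : ℕ → ℝ) (hm : ∀ t, m t = (1 / (M : ℝ)) * ∑ i, ‖Δ t i‖ ^ 2)
    (v : ℕ → EuclideanSpace ℝ (Fin d))
    (hv0 : v 0 = Δbar 0)
    (hvrec : ∀ t : ℕ, v (t + 1) = Δbar (t + 1) + β • v t)
    (ηg : ℕ → ℝ) (hηg : ∀ t, 0 ≤ ηg t)
    (w : ℕ → EuclideanSpace ℝ (Fin d))
    (hwrec : ∀ t : ℕ, w (t + 1) = w t - ηg t • v t)
    (t : ℕ)
    (ha : ∀ s ≤ t, ⟪w s - wstar, Δbar s⟫ ≥ m s)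
    (hb : ∀ r < t, 2 * ηg r * ‖v r‖ ^ 2 ≤
      m r + ∑ k ∈ Finset.range r, (β / 2) ^ (r - k) * m k) :
    ⟪w t - wstar, v t⟫ ≥ m t + ∑ k ∈ Finset.range t, (β / 2) ^ (t - k) * m k := by
  induction t with
  | zero =>
    simpa [hv0] using ha 0 le_rfl
  | succ t ih =>
    have hS := ih (fun s hs => ha s (hs.trans (Nat.le_succ t)))
      (fun r hr => hb r (hr.trans (Nat.lt_succ_self t)))
    have ha' := ha (t + 1) le_rfl
    have hb' := hb t (Nat.lt_succ_self t)
    -- rewrite the sum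
    have hsum : ∑ k ∈ Finset.range (t + 1), (β / 2) ^ (t + 1 - k) * m k
        = (β / 2) * (m t + ∑ k ∈ Finset.range t, (β / 2) ^ (t - k) * m k) := by
      rw [Finset.sum_range_succ]
      have h1 : ∀ k ∈ Finset.range t, (β / 2) ^ (t + 1 - k) * m k
          = (β / 2) * ((β / 2) ^ (t - k) * m k) := by
        intro k hk
        have hk' : k < t := Finset.mem_range.mp hk
        have : t + 1 - k = (t - k) + 1 := by omega
        rw [this, pow_succ]
        ring
      rw [Finset.sum_congr rfl h1, ← Finset.mul_sum]
      simp
      ring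
    have hinner : ⟪w (t + 1) - wstar, v (t + 1)⟫
        = ⟪w (t + 1) - wstar, Δbar (t + 1)⟫
          + β * (⟪w t - wstar, v t⟫ - ηg t * ‖v t‖ ^ 2) := by
      rw [hvrec, inner_add_right, real_inner_smul_right, hwrec]
      have : w t - ηg t • v t - wstar = (w t - wstar) - ηg t • v t := by abel
      rw [this]
      simp only [inner_sub_left, real_inner_smul_left, real_inner_self_eq_norm_sq]
    rw [hinner, hsum]
    have key : ⟪w t - wstar, v t⟫ - ηg t * ‖v t‖ ^ 2
        ≥ (1 / 2) * (m t + ∑ k ∈ Finset.range t, (β / 2) ^ (t - k) * m k) := by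
      nlinarith [hS, hb']
    nlinarith [ha', mul_le_mul_of_nonneg_left key hβ]
end
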